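/- arXiv:1603.00525 — 2 statements merged into one kernel-verified Lean document; each statement's English description precedes it below -/
import Mathlib

section
/- Lebesgue density theorem for Bernoulli measures on Cantor space: if A ⊆ 2^ω is Borel and p ∈ (0,1), then for μ_p-almost every x ∈ A, the density lim_{n→∞} μ_p(A ∩ [x↾n]) / μ_p([x↾n]) equals 1. -/
open MeasureTheory

/-- Pullback of `f : ℕ → ℕ`: `(pullback f A) n = A (f n)`. -/
def pullback {α : Type*} (f : ℕ → ℕ) (A : ℕ → α) : ℕ → α := fun n => A (f n)

/-- The cylinder of sequences extending the finite string `σ`. -/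
def cyl (σ : List Bool) : Set (ℕ → Bool) :=
  {X | ∀ i : Fin σ.length, X i = σ.get i}

/-- The cylinder determined by the first `n` values of `x`. -/
def cylOf (x : ℕ → Bool) (n : ℕ) : Set (ℕ → Bool) :=
  cyl (List.ofFn fun i : Fin n => x i)

/-- `μ` is the Bernoulli product measure on `2^ω` with parameter `p`. -/
def IsBernoulli (p : ℝ) (μ : Measure (ℕ → Bool)) : Prop :=
  IsProbabilityMeasure μ ∧
    ∀ σ : List Bool,
      μ (cyl σ) = ENNReal.ofReal p ^ (σ.count true) *
        ENNReal.ofReal (1 - p) ^ (σ.count false)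

/-- Codes for oracle partial recursive functions. -/
inductive OCode : Type
  | oracle : OCode
  | zero : OCode
  | succ : OCode
  | left : OCode
  | right : OCode
  | pair : OCode → OCode → OCode
  | comp : OCode → OCode → OCode
  | prec : OCode → OCode → OCode
  | rfind' : OCode → OCode

/-- Evaluation of oracle codes relative to the oracle `O`. -/
def evalo (O : ℕ →. ℕ) : OCode → ℕ →. ℕ
  | .oracle => O
  | .zero => pure 0
  | .succ => Nat.succ
  | .left => ↑fun n : ℕ => n.unpair.1
  | .right => ↑fun n : ℕ => n.unpair.2
  | .pair cf cg => fun n => Nat.pair <$> evalo O cf n <*> evalo O cg n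
  | .comp cf cg => fun n => evalo O cg n >>= evalo O cf
  | .prec cf cg =>
    Nat.unpaired fun a n =>
      n.rec (evalo O cf a) fun y IH => do
        let i ← IH
        evalo O cg (Nat.pair a (Nat.pair y i))
  | .rfind' cf =>
    Nat.unpaired fun a m =>
      (Nat.rfind fun n => (fun m => m = 0) <$> evalo O cf (Nat.pair a (n + m))).map (· + m)

/-- A set `B ∈ 2^ω` viewed as a (total) oracle. -/
def oracleOf (B : ℕ → Bool) : ℕ →. ℕ := fun n => Part.some (B n).toNat

/-- Turing reducibility `A ≤_T B` on Cantor space. -/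
def TLe (A B : ℕ → Bool) : Prop :=
  ∃ c : OCode, ∀ n, evalo (oracleOf B) c n = Part.some (A n).toNat

/-- Turing equivalence on Cantor space. -/
def TEquiv (A B : ℕ → Bool) : Prop := TLe A B ∧ TLe B A

/-- Turing reducibility of `A ∈ 2^ω` to an oracle in `ω^ω`. -/
def TLe' (A : ℕ → Bool) (B : ℕ → ℕ) : Prop :=
  ∃ c : OCode, ∀ n, evalo (fun k => Part.some (B k)) c n = Part.some (A n).toNat

/-- `W c X`: the c.e. set with oracle code `c` relative to the oracle `X`. -/
def W (c : OCode) (X : ℕ → Bool) : Set ℕ := {n | (evalo (oracleOf X) c n).Dom}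

/-- A Martin-Löf test relative to oracle `O` for the measure `μ`. -/
def MLTest (O : ℕ →. ℕ) (μ : Measure (ℕ → Bool)) (U : ℕ → Set (ℕ → Bool)) : Prop :=
  (∃ c : OCode, ∀ n, U n =
      ⋃ σ ∈ {σ : List Bool | (evalo O c (Nat.pair n (Encodable.encode σ))).Dom}, cyl σ) ∧
    ∀ n, μ (U n) ≤ 2⁻¹ ^ n

/-- Martin-Löf randomness relative to the oracle `O` and measure `μ`. -/
def MLRandom (O : ℕ →. ℕ) (μ : Measure (ℕ → Bool)) (X : ℕ → Bool) : Prop :=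
  ∀ U : ℕ → Set (ℕ → Bool), MLTest O μ U → X ∉ ⋂ n, U n

/-- The real parameter coded by `p ∈ 2^ω` via binary expansion. -/
noncomputable def realOf (p : ℕ → Bool) : ℝ :=
  ∑' n, if p n then (2 : ℝ)⁻¹ ^ (n + 1) else 0

/-- A permutation of `ℕ`, coded as an oracle. -/
def oracleOfFn (f : ℕ → ℕ) : ℕ →. ℕ := fun n => Part.some (f n)

/-- The effective join of `X ∈ 2^ω` and `f ∈ ω^ω`. -/
def join (X : ℕ → Bool) (f : ℕ → ℕ) : ℕ → ℕ :=
  fun k => if k % 2 = 0 then (X (k / 2)).toNat else f (k / 2)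


/-! ### Auxiliary material for the Lebesgue density theorem -/

noncomputable def cantorMetric : MetricSpace (ℕ → Bool) :=
  PiNat.metricSpaceOfDiscreteUniformity (fun _ => rfl)

attribute [local instance] cantorMetric

lemma cantor_dist_eq_of_ne {x y : ℕ → Bool} (h : x ≠ y) :
    dist x y = (1 / 2 : ℝ) ^ (PiNat.firstDiff x y) := PiNat.dist_eq_of_ne h

lemma cylOf_eq_cylinder (x : ℕ → Bool) (n : ℕ) : cylOf x n = PiNat.cylinder x n := by
  ext y
  constructor
  · intro hy i hi
    have := hy ⟨i, by simpa using hi⟩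
    simpa using this
  · intro hy i
    have hi : (i : ℕ) < n := by simpa using i.isLt
    simpa using hy i hi

lemma closedBall_eq_cylinder (x : ℕ → Bool) {n : ℕ} {r : ℝ} (h1 : (1 / 2 : ℝ) ^ n ≤ r)
    (h2 : ∀ m, (1 / 2 : ℝ) ^ m ≤ r → n ≤ m) :
    Metric.closedBall x r = PiNat.cylinder x n := by
  have hr0 : (0 : ℝ) ≤ r := le_trans (by positivity) h1
  ext y
  simp only [Metric.mem_closedBall]
  rcases eq_or_ne y x with rfl | hne
  · simp [PiNat.self_mem_cylinder, dist_self, hr0]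
  · rw [cantor_dist_eq_of_ne hne, PiNat.mem_cylinder_iff_le_firstDiff hne]
    constructor
    · intro h; exact h2 _ h
    · intro h
      exact le_trans (pow_le_pow_of_le_one (by norm_num) (by norm_num) h) h1

lemma closedBall_half_pow (x : ℕ → Bool) (n : ℕ) :
    Metric.closedBall x ((1 / 2 : ℝ) ^ n) = PiNat.cylinder x n := by
  apply closedBall_eq_cylinder x le_rfl
  intro m hm
  exact le_of_not_gt fun hlt => absurd hm (not_le.2 (by
    apply pow_lt_pow_right_of_lt_one₀ (by norm_num) (by norm_num) hlt))

lemma mu_cylOf_succ (p : ℝ) (μ : Measure (ℕ → Bool)) (hμ : IsBernoulli p μ)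
    (x : ℕ → Bool) (n : ℕ) :
    μ (cylOf x (n + 1)) =
      μ (cylOf x n) * (if x n then ENNReal.ofReal p else ENNReal.ofReal (1 - p)) := by
  have hl : (List.ofFn fun i : Fin (n + 1) => x i)
      = (List.ofFn fun i : Fin n => x i) ++ [x n] := by
    rw [List.ofFn_succ']
    simp [List.concat_eq_append]
  rw [cylOf, cylOf, hμ.2, hμ.2, hl]
  cases hxn : x n <;>
    simp [List.count_append, pow_succ, List.count_singleton'] <;> ring

lemma mu_cyl_doubling_step (p : ℝ) (hp : p ∈ Set.Ioo (0 : ℝ) 1) (μ : Measure (ℕ → Bool))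
    (hμ : IsBernoulli p μ) (x : ℕ → Bool) (n : ℕ) :
    μ (PiNat.cylinder x n) ≤
      ((p⁻¹).toNNReal ⊔ ((1 - p)⁻¹).toNNReal : NNReal) * μ (PiNat.cylinder x (n + 1)) := by
  set C : NNReal := (p⁻¹).toNNReal ⊔ ((1 - p)⁻¹).toNNReal with hC
  rw [← cylOf_eq_cylinder, ← cylOf_eq_cylinder, mu_cylOf_succ p μ hμ x n]
  set r : ENNReal := if x n then ENNReal.ofReal p else ENNReal.ofReal (1 - p) with hr
  have h1p : (0 : ℝ) < 1 - p := by linarith [hp.2]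
  have hone : 1 ≤ (C : ENNReal) * r := by
    have hcp : (ENNReal.ofReal p)⁻¹ ≤ (C : ENNReal) := by
      rw [← ENNReal.ofReal_inv_of_pos hp.1]
      rw [ENNReal.ofReal]
      exact ENNReal.coe_le_coe.2 (le_sup_left : (p⁻¹).toNNReal ≤ C)
    have hcq : (ENNReal.ofReal (1 - p))⁻¹ ≤ (C : ENNReal) := by
      rw [← ENNReal.ofReal_inv_of_pos h1p]
      rw [ENNReal.ofReal]
      exact ENNReal.coe_le_coe.2 (le_sup_right : ((1 - p)⁻¹).toNNReal ≤ C)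
    rcases hx : x n with h | h <;> rw [hr]
    · calc (1 : ENNReal) = (ENNReal.ofReal (1 - p))⁻¹ * ENNReal.ofReal (1 - p) :=
            (ENNReal.inv_mul_cancel (by simpa using h1p) ENNReal.ofReal_ne_top).symm
      _ ≤ (C : ENNReal) * ENNReal.ofReal (1 - p) := mul_le_mul_left hcq _
      _ = (C : ENNReal) * (if x n then ENNReal.ofReal p else ENNReal.ofReal (1 - p)) := by
            simp [hx]
    · calc (1 : ENNReal) = (ENNReal.ofReal p)⁻¹ * ENNReal.ofReal p :=
            (ENNReal.inv_mul_cancel (by simpa using hp.1) ENNReal.ofReal_ne_top).symm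
      _ ≤ (C : ENNReal) * ENNReal.ofReal p := mul_le_mul_left hcp _
      _ = (C : ENNReal) * (if x n then ENNReal.ofReal p else ENNReal.ofReal (1 - p)) := by
            simp [hx]
  calc μ (cylOf x n) = 1 * μ (cylOf x n) := (one_mul _).symm
    _ ≤ ((C : ENNReal) * r) * μ (cylOf x n) := mul_le_mul_left hone _
    _ = (C : ENNReal) * (μ (cylOf x n) * r) := by ring

lemma bernoulli_doubling (p : ℝ) (hp : p ∈ Set.Ioo (0 : ℝ) 1) (μ : Measure (ℕ → Bool))
    (hμ : IsBernoulli p μ) : IsUnifLocDoublingMeasure μ := by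
  constructor
  refine ⟨(p⁻¹).toNNReal ⊔ ((1 - p)⁻¹).toNNReal, ?_⟩
  have hIoc : Set.Ioc (0 : ℝ) (1 / 2) ∈ nhdsWithin (0 : ℝ) (Set.Ioi 0) :=
    Ioc_mem_nhdsGT_of_mem ⟨le_rfl, one_half_pos⟩
  filter_upwards [hIoc] with ε hε x
  obtain ⟨hε0, hε2⟩ := hε
  have hex : ∃ n, (1 / 2 : ℝ) ^ n ≤ ε := by
    obtain ⟨n, hn⟩ := exists_pow_lt_of_lt_one hε0 (by norm_num : (1 / 2 : ℝ) < 1)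
    exact ⟨n, hn.le⟩
  have hn1 : (1 / 2 : ℝ) ^ (Nat.find hex) ≤ ε := Nat.find_spec hex
  have hmin : ∀ m, (1 / 2 : ℝ) ^ m ≤ ε → Nat.find hex ≤ m := fun m hm => Nat.find_min' hex hm
  have hpos : 1 ≤ Nat.find hex := by
    rcases Nat.eq_zero_or_pos (Nat.find hex) with h0 | h
    · exfalso; rw [h0, pow_zero] at hn1; linarith
    · exact h
  obtain ⟨m, hm⟩ : ∃ m, Nat.find hex = m + 1 :=
    ⟨Nat.find hex - 1, (Nat.succ_pred_eq_of_pos hpos).symm⟩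
  have hball : Metric.closedBall x ε = PiNat.cylinder x (m + 1) := by
    rw [← hm]; exact closedBall_eq_cylinder x hn1 hmin
  have hsub : Metric.closedBall x (2 * ε) ⊆ PiNat.cylinder x m := by
    intro y hy
    rcases eq_or_ne y x with rfl | hne
    · exact PiNat.self_mem_cylinder _ _
    · have hd : (1 / 2 : ℝ) ^ (PiNat.firstDiff y x) ≤ 2 * ε := by
        have h' := Metric.mem_closedBall.1 hy
        rwa [cantor_dist_eq_of_ne hne] at h'
      have hd' : (1 / 2 : ℝ) ^ (PiNat.firstDiff y x + 1) ≤ ε := by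
        rw [pow_succ]; linarith
      have hmm : m + 1 ≤ PiNat.firstDiff y x + 1 := by
        rw [← hm]; exact hmin _ hd'
      exact (PiNat.mem_cylinder_iff_le_firstDiff hne m).2 (Nat.le_of_succ_le_succ hmm)
  calc μ (Metric.closedBall x (2 * ε)) ≤ μ (PiNat.cylinder x m) := measure_mono hsub
    _ ≤ ((p⁻¹).toNNReal ⊔ ((1 - p)⁻¹).toNNReal : NNReal) * μ (PiNat.cylinder x (m + 1)) :=
        mu_cyl_doubling_step p hp μ hμ x m
    _ = ((p⁻¹).toNNReal ⊔ ((1 - p)⁻¹).toNNReal : NNReal) * μ (Metric.closedBall x ε) := by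
        rw [hball]

/-- Lebesgue density theorem for Bernoulli measures on Cantor
space. -/
theorem lebesgue_density (p : ℝ) (hp : p ∈ Set.Ioo (0 : ℝ) 1)
    (μ : Measure (ℕ → Bool)) (hμ : IsBernoulli p μ)
    (A : Set (ℕ → Bool)) (hA : MeasurableSet A) :
    ∀ᵐ x ∂μ, x ∈ A →
      Filter.Tendsto (fun n => μ (A ∩ cylOf x n) / μ (cylOf x n))
        Filter.atTop (nhds 1) := by
  haveI hprob : IsProbabilityMeasure μ := hμ.1
  haveI : IsUnifLocDoublingMeasure μ := bernoulli_doubling p hp μ hμ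
  haveI : @SecondCountableTopology (ℕ → Bool) (PseudoMetricSpace.toUniformSpace.toTopologicalSpace) := by
    exact (inferInstance : SecondCountableTopology (ℕ → Bool))
  haveI : @BorelSpace (ℕ → Bool) (PseudoMetricSpace.toUniformSpace.toTopologicalSpace) _ := by
    exact (inferInstance : BorelSpace (ℕ → Bool))
  have key := IsUnifLocDoublingMeasure.ae_tendsto_measure_inter_div μ A 1
  rw [MeasureTheory.ae_restrict_iff' hA] at key
  filter_upwards [key] with x hx hxA
  have hδ : Filter.Tendsto (fun j : ℕ => (1 / 2 : ℝ) ^ j) Filter.atTop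
      (nhdsWithin (0 : ℝ) (Set.Ioi 0)) := by
    apply tendsto_nhdsWithin_of_tendsto_nhds_of_eventually_within
    · exact tendsto_pow_atTop_nhds_zero_of_lt_one (by norm_num) (by norm_num)
    · exact Filter.Eventually.of_forall (fun j => Set.mem_Ioi.2 (by positivity))
  have hmem : ∀ᶠ j in Filter.atTop,
      x ∈ Metric.closedBall x (1 * (1 / 2 : ℝ) ^ j) :=
    Filter.Eventually.of_forall (fun j => by
      rw [one_mul]; exact Metric.mem_closedBall_self (by positivity))
  have h2 := hx hxA (fun _ => x) (fun j => (1 / 2 : ℝ) ^ j) hδ hmem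
  have hb : ∀ j : ℕ, Metric.closedBall x ((1 / 2 : ℝ) ^ j) = cylOf x j := fun j => by
    rw [closedBall_half_pow, cylOf_eq_cylinder]
  simpa only [hb] using h2
end

section
/- Let f be a permutation of ω with pullback F = f*. If the set of G ∈ 2^ω with F(G) ≤_T G has positive Lebesgue measure, then f is computable. -/
open MeasureTheory

/-! ### Auxiliary development -/

namespace OCodeDev

open Nat

/-- Encoding of `OCode` into `ℕ`. -/
def encodeOC : OCode → ℕ
  | .oracle => 0
  | .zero => 1
  | .succ => 2
  | .left => 3
  | .right => 4
  | .pair cf cg => 2 * (2 * Nat.pair (encodeOC cf) (encodeOC cg)) + 5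
  | .comp cf cg => 2 * (2 * Nat.pair (encodeOC cf) (encodeOC cg) + 1) + 5
  | .prec cf cg => (2 * (2 * Nat.pair (encodeOC cf) (encodeOC cg)) + 1) + 5
  | .rfind' cf => (2 * (2 * encodeOC cf + 1) + 1) + 5

/-- Partial inverse of `encodeOC`. -/
def ofNatOC : ℕ → OCode
  | 0 => .oracle
  | 1 => .zero
  | 2 => .succ
  | 3 => .left
  | 4 => .right
  | n + 5 =>
    let m := n.div2.div2
    have hm : m < n + 5 := by
      simp only [m, div2_val]
      exact
        lt_of_le_of_lt (le_trans (Nat.div_le_self _ _) (Nat.div_le_self _ _))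
          (Nat.succ_le_succ (Nat.le_add_right _ _))
    have _m1 : m.unpair.1 < n + 5 := lt_of_le_of_lt m.unpair_left_le hm
    have _m2 : m.unpair.2 < n + 5 := lt_of_le_of_lt m.unpair_right_le hm
    match n.bodd, n.div2.bodd with
    | false, false => .pair (ofNatOC m.unpair.1) (ofNatOC m.unpair.2)
    | false, true => .comp (ofNatOC m.unpair.1) (ofNatOC m.unpair.2)
    | true, false => .prec (ofNatOC m.unpair.1) (ofNatOC m.unpair.2)
    | true, true => .rfind' (ofNatOC m)
  decreasing_by all_goals (simp_wf; simp only [m] at *; omega)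

theorem ofNatOC_encodeOC : ∀ c, ofNatOC (encodeOC c) = c := by
  intro c; induction c <;> simp [encodeOC, ofNatOC, Nat.div2_val, *]

instance : Countable OCode :=
  ⟨⟨encodeOC, Function.LeftInverse.injective ofNatOC_encodeOC⟩⟩

/-- Bounded evaluation of oracle codes with total oracle `g`. -/
def evalno (g : ℕ → ℕ) : ℕ → OCode → ℕ → Option ℕ
  | 0, _, _ => Option.none
  | k + 1, .oracle, n => do
    guard (n ≤ k)
    return (g n)
  | k + 1, .zero, n => do
    guard (n ≤ k)
    return 0
  | k + 1, .succ, n => do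
    guard (n ≤ k)
    return (Nat.succ n)
  | k + 1, .left, n => do
    guard (n ≤ k)
    return n.unpair.1
  | k + 1, .right, n => do
    guard (n ≤ k)
    return n.unpair.2
  | k + 1, .pair cf cg, n => do
    guard (n ≤ k)
    Nat.pair <$> evalno g (k + 1) cf n <*> evalno g (k + 1) cg n
  | k + 1, .comp cf cg, n => do
    guard (n ≤ k)
    let x ← evalno g (k + 1) cg n
    evalno g (k + 1) cf x
  | k + 1, .prec cf cg, n => do
    guard (n ≤ k)
    n.unpaired fun a q =>
      q.casesOn (evalno g (k + 1) cf a) fun y => do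
        let i ← evalno g k (.prec cf cg) (Nat.pair a y)
        evalno g (k + 1) cg (Nat.pair a (Nat.pair y i))
  | k + 1, .rfind' cf, n => do
    guard (n ≤ k)
    n.unpaired fun a m => do
      let x ← evalno g (k + 1) cf (Nat.pair a m)
      if x = 0 then pure m else evalno g k (.rfind' cf) (Nat.pair a (m + 1))

theorem evalno_bound {g : ℕ → ℕ} : ∀ {k c n x}, x ∈ evalno g k c n → n < k
  | 0, c, n, x, h => by simp [evalno] at h
  | k + 1, c, n, x, h => by
    suffices ∀ {o : Option ℕ}, x ∈ do { guard (n ≤ k); o } → n < k + 1 by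
      cases c <;> rw [evalno] at h <;> exact this h
    simpa [Option.bind_eq_some_iff] using Nat.lt_succ_of_le

theorem evalno_mono :
    ∀ {k₁ k₂ c n x} {g₁ g₂ : ℕ → ℕ}, k₁ ≤ k₂ → (∀ i < k₁, g₁ i = g₂ i) →
      x ∈ evalno g₁ k₁ c n → x ∈ evalno g₂ k₂ c n
  | 0, k₂, c, n, x, g₁, g₂, _, _, h => by simp [evalno] at h
  | k + 1, k₂ + 1, c, n, x, g₁, g₂, hl, hag, h => by
    have hl' := Nat.le_of_succ_le_succ hl
    have this :
      ∀ {k k₂ n x : ℕ} {o₁ o₂ : Option ℕ},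
        k ≤ k₂ → (n ≤ k → x ∈ o₁ → x ∈ o₂) →
          x ∈ do { guard (n ≤ k); o₁ } → x ∈ do { guard (n ≤ k₂); o₂ } := by
      simp only [Option.mem_def, bind, Option.bind_eq_some_iff, Option.guard_eq_some', exists_and_left,
        exists_const, and_imp]
      introv h h₁ h₂ h₃
      exact ⟨le_trans h₂ h, h₁ h₂ h₃⟩
    simp only [Option.mem_def] at h ⊢
    induction' c with cf cg hf hg cf cg hf hg cf cg hf hg cf hf generalizing x n <;>
      rw [evalno] at h ⊢ <;> refine this hl' (fun hn h => ?_) h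
    · -- oracle
      rw [hag n (Nat.lt_succ_of_le hn)] at h; exact h
    iterate 4 exact h
    · -- pair cf cg
      simp only [Seq.seq, Option.map_eq_map, Option.mem_def, Option.bind_eq_some_iff,
        Option.map_eq_some_iff, exists_exists_and_eq_and] at h ⊢
      exact h.imp fun a => And.imp (hf _ _) <| Exists.imp fun b => And.imp_left (hg _ _)
    · -- comp cf cg
      simp only [bind, Option.mem_def, Option.bind_eq_some_iff] at h ⊢
      exact h.imp fun a => And.imp (hg _ _) (hf _ _)
    · -- prec cf cg
      revert h
      simp only [unpaired, bind, Option.mem_def]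
      induction n.unpair.2 <;> simp [Option.bind_eq_some_iff]
      · apply hf
      · exact fun y h₁ h₂ =>
          ⟨y, evalno_mono hl' (fun i hi => hag i (Nat.lt_succ_of_lt hi)) h₁, hg _ _ h₂⟩
    · -- rfind' cf
      simp only [unpaired, bind, pair_unpair, Option.pure_def, Option.mem_def,
        Option.bind_eq_some_iff] at h ⊢
      refine h.imp fun x => And.imp (hf _ _) ?_
      by_cases x0 : x = 0 <;> simp [x0]
      exact evalno_mono hl' fun i hi => hag i (Nat.lt_succ_of_lt hi)

theorem evalno_sound {g : ℕ → ℕ} :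
    ∀ {k c n x}, x ∈ evalno g k c n → x ∈ evalo (fun i => Part.some (g i)) c n
  | 0, _, n, x, h => by simp [evalno] at h
  | k + 1, c, n, x, h => by
    induction' c with cf cg hf hg cf cg hf hg cf cg hf hg cf hf generalizing x n <;>
        simp [evalo, evalno, Option.bind_eq_some_iff, Seq.seq ] at h ⊢ <;>
      cases' h with _ h
    iterate 5 simpa [pure, PFun.pure, eq_comm] using h
    · -- pair cf cg
      rcases h with ⟨y, ef, z, eg, rfl⟩
      exact ⟨_, hf _ _ ef, _, hg _ _ eg, rfl⟩
    · -- comp cf cg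
      rcases h with ⟨y, eg, ef⟩
      exact Part.mem_bind (hg _ _ eg) (hf _ _ ef)
    · -- prec cf cg
      revert h
      induction' n.unpair.2 with m IH generalizing x <;> simp [Option.bind_eq_some_iff]
      · apply hf
      · refine fun y h₁ h₂ => ⟨y, IH _ ?_, ?_⟩
        · have := evalno_mono k.le_succ (fun _ _ => rfl) h₁
          simp [evalno, Option.bind_eq_some_iff] at this
          exact this.2
        · exact hg _ _ h₂
    · -- rfind' cf
      rcases h with ⟨m, h₁, h₂⟩
      by_cases m0 : m = 0 <;> simp [m0] at h₂
      · exact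
          ⟨0, Nat.mem_rfind.2 ⟨by simpa [m0] using hf _ _ h₁, fun {m} => (Nat.not_lt_zero _).elim⟩, by simp [h₂]⟩
      · have := evalno_sound h₂
        simp [evalo] at this
        rcases this with ⟨y, hy, rfl⟩
        rcases Nat.mem_rfind.1 hy with ⟨hy₁, hy₂⟩
        refine
          ⟨y + 1, Nat.mem_rfind.2 ⟨by simpa [add_comm, add_left_comm] using hy₁, fun {i} im => ?_⟩, by
            simp [add_comm, add_left_comm]⟩
        cases' i with i
        · exact (Part.mem_map_iff _).2 ⟨m, by simpa using hf _ _ h₁, by simp [m0]⟩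
        · rcases (Part.mem_map_iff _).1 (hy₂ (Nat.lt_of_succ_lt_succ im)) with ⟨z, hz, z0⟩
          exact (Part.mem_map_iff _).2 ⟨z, by simpa [add_comm, add_left_comm] using hz, z0⟩

theorem evalno_complete {g : ℕ → ℕ} {c n x} :
    x ∈ evalo (fun i => Part.some (g i)) c n ↔ ∃ k, x ∈ evalno g k c n := by
  refine ⟨fun h => ?_, fun ⟨k, h⟩ => evalno_sound h⟩
  rsuffices ⟨k, h⟩ : ∃ k, x ∈ evalno g (k + 1) c n
  · exact ⟨k + 1, h⟩
  induction c generalizing n x with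
      simp [evalo, evalno, pure, PFun.pure, Seq.seq, Option.bind_eq_some_iff] at h ⊢
  | pair cf cg hf hg =>
    rcases h with ⟨x, hx, y, hy, rfl⟩
    rcases hf hx with ⟨k₁, hk₁⟩; rcases hg hy with ⟨k₂, hk₂⟩
    refine ⟨max k₁ k₂, ?_⟩
    refine
      ⟨le_max_of_le_left <| Nat.le_of_lt_succ <| evalno_bound hk₁, _,
        evalno_mono (Nat.succ_le_succ <| le_max_left _ _) (fun _ _ => rfl) hk₁, _,
        evalno_mono (Nat.succ_le_succ <| le_max_right _ _) (fun _ _ => rfl) hk₂, rfl⟩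
  | comp cf cg hf hg =>
    rcases Part.mem_bind_iff.1 h with ⟨y, hy, hx⟩
    rcases hg hy with ⟨k₁, hk₁⟩; rcases hf hx with ⟨k₂, hk₂⟩
    refine ⟨max k₁ k₂, ?_⟩
    exact
      ⟨le_max_of_le_left <| Nat.le_of_lt_succ <| evalno_bound hk₁, _,
        evalno_mono (Nat.succ_le_succ <| le_max_left _ _) (fun _ _ => rfl) hk₁,
        evalno_mono (Nat.succ_le_succ <| le_max_right _ _) (fun _ _ => rfl) hk₂⟩
  | prec cf cg hf hg =>
    revert h
    generalize n.unpair.1 = n₁; generalize n.unpair.2 = n₂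
    induction' n₂ with m IH generalizing x n <;> simp [Option.bind_eq_some_iff]
    · intro h
      rcases hf h with ⟨k, hk⟩
      exact ⟨_, le_max_left _ _,
        evalno_mono (Nat.succ_le_succ <| le_max_right _ _) (fun _ _ => rfl) hk⟩
    · intro y hy hx
      rcases IH hy with ⟨k₁, nk₁, hk₁⟩
      rcases hg hx with ⟨k₂, hk₂⟩
      refine
        ⟨(max k₁ k₂).succ,
          Nat.le_succ_of_le <| le_max_of_le_left <|
            le_trans (le_max_left _ (Nat.pair n₁ m)) nk₁, y,
          evalno_mono (Nat.succ_le_succ <| le_max_left _ _) (fun _ _ => rfl) ?_,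
          evalno_mono (Nat.succ_le_succ <| Nat.le_succ_of_le <| le_max_right _ _)
            (fun _ _ => rfl) hk₂⟩
      simp only [evalno, bind, unpaired, unpair_pair, Option.mem_def, Option.bind_eq_some_iff,
        Option.guard_eq_some', exists_and_left, exists_const]
      exact ⟨le_trans (le_max_right _ _) nk₁, hk₁⟩
  | rfind' cf hf =>
    rcases h with ⟨y, hy, rfl⟩
    rcases Nat.mem_rfind.1 hy with ⟨hy₁, hy₂⟩
    clear hy
    suffices ∃ k, y + n.unpair.2 ∈ evalno g (k + 1) (.rfind' cf) (Nat.pair n.unpair.1 n.unpair.2) by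
      simpa [evalno, Option.bind_eq_some_iff]
    revert hy₁ hy₂
    generalize n.unpair.2 = m
    intro hy₁ hy₂
    induction' y with y IH generalizing m <;> simp [evalno, Option.bind_eq_some_iff]
    · simp at hy₁
      rcases hf hy₁ with ⟨k, hk⟩
      exact ⟨_, Nat.le_of_lt_succ <| evalno_bound hk, _, hk, by simp⟩
    · rcases (Part.mem_map_iff _).1 (hy₂ (Nat.succ_pos _)) with ⟨a, ha, a0⟩
      simp only [decide_eq_false_iff_not] at a0
      rcases hf ha with ⟨k₁, hk₁⟩
      rcases IH m.succ (by simpa [Nat.succ_eq_add_one, add_comm, add_left_comm] using hy₁)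
          (fun {i} hi => by
          simpa [Nat.succ_eq_add_one, add_comm, add_left_comm] using
            hy₂ (Nat.succ_lt_succ hi)) with
        ⟨k₂, hk₂⟩
      use (max k₁ k₂).succ
      rw [zero_add] at hk₁
      use Nat.le_succ_of_le <| le_max_of_le_left <| Nat.le_of_lt_succ <| evalno_bound hk₁
      use a
      use evalno_mono (Nat.succ_le_succ <| Nat.le_succ_of_le <| le_max_left _ _)
        (fun _ _ => rfl) hk₁
      simpa [a0, add_comm, add_left_comm] using
        evalno_mono (Nat.succ_le_succ <| le_max_right _ _) (fun _ _ => rfl) hk₂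
  | _ => exact ⟨⟨_, le_rfl⟩, h.symm⟩

end OCodeDev

namespace OCodeDev

open Nat Primrec

/-- The oracle given by the binary digits of `j`. -/
def bitO (j : ℕ) : ℕ → ℕ := fun i => (j.testBit i).toNat

theorem bitO_eq (j i : ℕ) : bitO j i = j / 2 ^ i % 2 := by
  rcases Nat.mod_two_eq_zero_or_one (j / 2 ^ i) with h | h <;>
    simp [bitO, Nat.testBit_eq_decide_div_mod_eq, h]

theorem primrec_pow : Primrec₂ ((· ^ ·) : ℕ → ℕ → ℕ) := by
  have : Primrec₂ fun (a n : ℕ) => n.rec (motive := fun _ => ℕ) 1 fun _ ih => ih * a :=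
    Primrec.nat_rec (Primrec.const 1)
      (Primrec.nat_mul.comp (Primrec.snd.comp Primrec.snd) Primrec.fst).to₂
  exact this.of_eq fun a n => by induction n with
    | zero => rfl
    | succ n ih => simpa [pow_succ] using congrArg (· * a) ih

theorem primrec_bitO : Primrec₂ bitO := by
  have : Primrec₂ fun (j i : ℕ) => j / 2 ^ i % 2 :=
    (Primrec.nat_mod.comp
      (Primrec.nat_div.comp Primrec.fst (primrec_pow.comp (Primrec.const 2) Primrec.snd))
      (Primrec.const 2)).to₂
  exact this.of_eq fun j i => (bitO_eq j i).symm

/- Characterisations of `evalno` avoiding `do`-notation. -/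

theorem evalno_zero_of_ge {g : ℕ → ℕ} {k c n} (h : k ≤ n) : evalno g k c n = Option.none := by
  cases hx : evalno g k c n with
  | none => rfl
  | some x => exact absurd (evalno_bound (hx ▸ rfl : x ∈ evalno g k c n)) (not_lt.2 h)

theorem evalno_oracle_eq (g : ℕ → ℕ) (k n : ℕ) :
    evalno g k .oracle n = if n + 1 ≤ k then some (g n) else none := by
  cases k with
  | zero => simp [evalno]
  | succ k =>
    by_cases h : n ≤ k <;>
      simp [evalno, h, Nat.succ_le_succ_iff, Option.guard, guard, failure]

theorem evalno_zerocode_eq (g : ℕ → ℕ) (k n : ℕ) :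
    evalno g k .zero n = if n + 1 ≤ k then some 0 else none := by
  cases k with
  | zero => simp [evalno]
  | succ k =>
    by_cases h : n ≤ k <;>
      simp [evalno, h, Nat.succ_le_succ_iff, Option.guard, guard, failure]

theorem evalno_succ_eq (g : ℕ → ℕ) (k n : ℕ) :
    evalno g k .succ n = if n + 1 ≤ k then some (n + 1) else none := by
  cases k with
  | zero => simp [evalno]
  | succ k =>
    by_cases h : n ≤ k <;>
      simp [evalno, h, Nat.succ_le_succ_iff, Option.guard, guard, failure]

theorem evalno_left_eq (g : ℕ → ℕ) (k n : ℕ) :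
    evalno g k .left n = if n + 1 ≤ k then some n.unpair.1 else none := by
  cases k with
  | zero => simp [evalno]
  | succ k =>
    by_cases h : n ≤ k <;>
      simp [evalno, h, Nat.succ_le_succ_iff, Option.guard, guard, failure]

theorem evalno_right_eq (g : ℕ → ℕ) (k n : ℕ) :
    evalno g k .right n = if n + 1 ≤ k then some n.unpair.2 else none := by
  cases k with
  | zero => simp [evalno]
  | succ k =>
    by_cases h : n ≤ k <;>
      simp [evalno, h, Nat.succ_le_succ_iff, Option.guard, guard, failure]

theorem evalno_pair_eq (g : ℕ → ℕ) (k n : ℕ) (cf cg : OCode) :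
    evalno g k (.pair cf cg) n =
      if n + 1 ≤ k then
        (evalno g k cf n).bind fun x => (evalno g k cg n).map fun y => Nat.pair x y
      else none := by
  cases k with
  | zero => simp [evalno]
  | succ k =>
    by_cases h : n ≤ k <;>
      simp [evalno, h, Nat.succ_le_succ_iff, Option.guard, guard, failure, Seq.seq]
    cases evalno g (k + 1) cf n <;> simp

theorem evalno_comp_eq (g : ℕ → ℕ) (k n : ℕ) (cf cg : OCode) :
    evalno g k (.comp cf cg) n =
      if n + 1 ≤ k then (evalno g k cg n).bind fun x => evalno g k cf x
      else none := by
  cases k with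
  | zero => simp [evalno]
  | succ k =>
    by_cases h : n ≤ k <;>
      simp [evalno, h, Nat.succ_le_succ_iff, Option.guard, guard, failure]

theorem evalno_prec_eq (g : ℕ → ℕ) (k n : ℕ) (cf cg : OCode) :
    evalno g k (.prec cf cg) n =
      if n + 1 ≤ k then
        (n.unpair.2).casesOn (motive := fun _ => Option ℕ) (evalno g k cf n.unpair.1) fun y =>
          (evalno g (k - 1) (.prec cf cg) (Nat.pair n.unpair.1 y)).bind fun i =>
            evalno g k cg (Nat.pair n.unpair.1 (Nat.pair y i))
      else none := by
  cases k with
  | zero => simp [evalno]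
  | succ k =>
    by_cases h : n ≤ k <;>
      simp [evalno, h, Nat.succ_le_succ_iff, Option.guard, guard, failure, Nat.unpaired]

theorem evalno_rfind'_eq (g : ℕ → ℕ) (k n : ℕ) (cf : OCode) :
    evalno g k (.rfind' cf) n =
      if n + 1 ≤ k then
        (evalno g k cf (Nat.pair n.unpair.1 n.unpair.2)).bind fun x =>
          if x = 0 then some n.unpair.2
          else evalno g (k - 1) (.rfind' cf) (Nat.pair n.unpair.1 (n.unpair.2 + 1))
      else none := by
  cases k with
  | zero => simp [evalno]
  | succ k =>
    by_cases h : n ≤ k <;>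
      simp [evalno, h, Nat.succ_le_succ_iff, Option.guard, guard, failure, Nat.unpaired]

theorem range_map_getD (m : ℕ) (f : ℕ → Option ℕ) (n : ℕ) :
    (((List.range m).map f).getD n none) = if n < m then f n else none := by
  split_ifs with h
  · rw [List.getD_eq_getElem?_getD]
    simp [List.getElem?_map, List.getElem?_range h]
  · rw [List.getD_eq_getElem?_getD, List.getElem?_eq_none] <;> simp [not_lt.1 h]

set_option maxHeartbeats 1000000 in
/-- `evalno` with a bit oracle is primitive recursive, for each fixed code. -/
theorem evalno_primrec (c : OCode) :
    Primrec fun p : ℕ × ℕ × ℕ => evalno (bitO p.1) p.2.1 c p.2.2 := by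
  induction c with
  | oracle =>
    refine (Primrec.ite ?_ ?_ (Primrec.const none)).of_eq fun p =>
      (evalno_oracle_eq _ _ _).symm
    · exact nat_le.comp (Primrec.succ.comp (Primrec.snd.comp Primrec.snd))
        (Primrec.fst.comp Primrec.snd)
    · exact Primrec.option_some.comp
        (primrec_bitO.comp Primrec.fst (Primrec.snd.comp Primrec.snd))
  | zero =>
    refine (Primrec.ite ?_ (Primrec.const (some 0)) (Primrec.const none)).of_eq fun p =>
      (evalno_zerocode_eq _ _ _).symm
    exact nat_le.comp (Primrec.succ.comp (Primrec.snd.comp Primrec.snd))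
      (Primrec.fst.comp Primrec.snd)
  | succ =>
    refine (Primrec.ite ?_ ?_ (Primrec.const none)).of_eq fun p =>
      (evalno_succ_eq _ _ _).symm
    · exact nat_le.comp (Primrec.succ.comp (Primrec.snd.comp Primrec.snd))
        (Primrec.fst.comp Primrec.snd)
    · exact Primrec.option_some.comp (Primrec.succ.comp (Primrec.snd.comp Primrec.snd))
  | left =>
    refine (Primrec.ite ?_ ?_ (Primrec.const none)).of_eq fun p =>
      (evalno_left_eq _ _ _).symm
    · exact nat_le.comp (Primrec.succ.comp (Primrec.snd.comp Primrec.snd))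
        (Primrec.fst.comp Primrec.snd)
    · exact Primrec.option_some.comp
        (Primrec.fst.comp (Primrec.unpair.comp (Primrec.snd.comp Primrec.snd)))
  | right =>
    refine (Primrec.ite ?_ ?_ (Primrec.const none)).of_eq fun p =>
      (evalno_right_eq _ _ _).symm
    · exact nat_le.comp (Primrec.succ.comp (Primrec.snd.comp Primrec.snd))
        (Primrec.fst.comp Primrec.snd)
    · exact Primrec.option_some.comp
        (Primrec.snd.comp (Primrec.unpair.comp (Primrec.snd.comp Primrec.snd)))
  | pair cf cg hf hg =>
    refine (Primrec.ite ?_ ?_ (Primrec.const none)).of_eq fun p =>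
      (evalno_pair_eq _ _ _ _ _).symm
    · exact nat_le.comp (Primrec.succ.comp (Primrec.snd.comp Primrec.snd))
        (Primrec.fst.comp Primrec.snd)
    · exact Primrec.option_bind hf
        (Primrec.option_map (hg.comp Primrec.fst)
          ((Primrec₂.natPair.comp (Primrec.snd.comp Primrec.fst) Primrec.snd).to₂))
  | comp cf cg hf hg =>
    refine (Primrec.ite ?_ ?_ (Primrec.const none)).of_eq fun p =>
      (evalno_comp_eq _ _ _ _ _).symm
    · exact nat_le.comp (Primrec.succ.comp (Primrec.snd.comp Primrec.snd))
        (Primrec.fst.comp Primrec.snd)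
    · exact Primrec.option_bind hg
        ((hf.comp (Primrec.pair (Primrec.fst.comp Primrec.fst)
          (Primrec.pair (Primrec.fst.comp (Primrec.snd.comp Primrec.fst)) Primrec.snd))).to₂)
  | prec cf cg hf hg =>
    set step : ℕ → ℕ → List (Option ℕ) → ℕ → Option ℕ := fun j k' T n =>
      (n.unpair.2).casesOn (motive := fun _ => Option ℕ)
        (evalno (bitO j) (k' + 1) cf n.unpair.1) fun y =>
          (T.getD (Nat.pair n.unpair.1 y) none).bind fun i =>
            evalno (bitO j) (k' + 1) cg (Nat.pair n.unpair.1 (Nat.pair y i)) with hstep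
    set tab : ℕ → ℕ → List (Option ℕ) := fun j k =>
      k.rec (motive := fun _ => List (Option ℕ)) []
        (fun k' T => (List.range (k' + 1)).map (step j k' T)) with htab
    have key : ∀ j k n, (tab j k).getD n none = evalno (bitO j) k (.prec cf cg) n := by
      intro j k
      induction k with
      | zero => intro n; simp [htab, evalno]
      | succ k ih =>
        intro n
        show (((List.range (k + 1)).map (step j k (tab j k))).getD n none) = _
        rw [range_map_getD, evalno_prec_eq]
        by_cases h : n + 1 ≤ k + 1
        · rw [if_pos (by omega), if_pos h]
          simp only [hstep, Nat.add_sub_cancel]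
          cases (n.unpair.2) with
          | zero => rfl
          | succ y => simp only [ih]
        · rw [if_neg (by omega), if_neg h]
    have hstepP : Primrec fun p : (ℕ × ℕ × List (Option ℕ)) × ℕ =>
        step p.1.1 p.1.2.1 p.1.2.2 p.2 := by
      have hj : Primrec fun p : (ℕ × ℕ × List (Option ℕ)) × ℕ => p.1.1 := Primrec.fst.comp .fst
      have hk : Primrec fun p : (ℕ × ℕ × List (Option ℕ)) × ℕ => p.1.2.1 :=
        Primrec.fst.comp (Primrec.snd.comp .fst)
      have hT : Primrec fun p : (ℕ × ℕ × List (Option ℕ)) × ℕ => p.1.2.2 :=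
        Primrec.snd.comp (Primrec.snd.comp .fst)
      have hn : Primrec fun p : (ℕ × ℕ × List (Option ℕ)) × ℕ => p.2 := Primrec.snd
      have hu1 : Primrec fun p : (ℕ × ℕ × List (Option ℕ)) × ℕ => p.2.unpair.1 :=
        Primrec.fst.comp (Primrec.unpair.comp hn)
      have hu2 : Primrec fun p : (ℕ × ℕ × List (Option ℕ)) × ℕ => p.2.unpair.2 :=
        Primrec.snd.comp (Primrec.unpair.comp hn)
      simp only [hstep]
      refine Primrec.nat_casesOn (β := Option ℕ) hu2
        (hf.comp (hj.pair ((Primrec.succ.comp hk).pair hu1))) ?_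
      refine Primrec.to₂ (Primrec.option_bind (β := ℕ) (σ := ℕ)
        ((Primrec.list_getD none).comp (hT.comp .fst)
          (Primrec₂.natPair.comp (hu1.comp .fst) Primrec.snd))
        (Primrec.to₂ (hg.comp
          ((hj.comp (Primrec.fst.comp .fst)).pair
            (((Primrec.succ.comp (hk.comp (Primrec.fst.comp .fst))).pair
              (Primrec₂.natPair.comp (hu1.comp (Primrec.fst.comp .fst))
                (Primrec₂.natPair.comp (Primrec.snd.comp .fst) Primrec.snd))))))))
    have hG : Primrec fun a : ℕ × ℕ × List (Option ℕ) =>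
        (List.range (a.2.1 + 1)).map (fun n => step a.1 a.2.1 a.2.2 n) :=
      Primrec.list_map (Primrec.list_range.comp (Primrec.succ.comp
        (Primrec.fst.comp Primrec.snd))) hstepP.to₂
    have htabP : Primrec₂ tab :=
      (Primrec.nat_rec (Primrec.const ([] : List (Option ℕ))) hG.to₂).of_eq fun j k => by
        induction k with
        | zero => rfl
        | succ k ih => show _ = (List.range (k + 1)).map (step j k (tab j k)); rw [← ih]
    refine Primrec.of_eq ?_ fun p => key p.1 p.2.1 p.2.2
    exact (Primrec.list_getD none).comp
      (htabP.comp Primrec.fst (Primrec.fst.comp Primrec.snd))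
      (Primrec.snd.comp Primrec.snd)
  | rfind' cf hf =>
    set step : ℕ → ℕ → List (Option ℕ) → ℕ → Option ℕ := fun j k' T n =>
      (evalno (bitO j) (k' + 1) cf (Nat.pair n.unpair.1 n.unpair.2)).bind fun x =>
        if x = 0 then some n.unpair.2
        else T.getD (Nat.pair n.unpair.1 (n.unpair.2 + 1)) none with hstep
    set tab : ℕ → ℕ → List (Option ℕ) := fun j k =>
      k.rec (motive := fun _ => List (Option ℕ)) []
        (fun k' T => (List.range (k' + 1)).map (step j k' T)) with htab
    have key : ∀ j k n, (tab j k).getD n none = evalno (bitO j) k (.rfind' cf) n := by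
      intro j k
      induction k with
      | zero => intro n; simp [htab, evalno]
      | succ k ih =>
        intro n
        show (((List.range (k + 1)).map (step j k (tab j k))).getD n none) = _
        rw [range_map_getD, evalno_rfind'_eq]
        by_cases h : n + 1 ≤ k + 1
        · rw [if_pos (by omega), if_pos h]
          simp only [hstep, Nat.add_sub_cancel, Nat.pair_unpair]
          simp only [ih]
        · rw [if_neg (by omega), if_neg h]
    have hstepP : Primrec fun p : (ℕ × ℕ × List (Option ℕ)) × ℕ =>
        step p.1.1 p.1.2.1 p.1.2.2 p.2 := by
      have hj : Primrec fun p : (ℕ × ℕ × List (Option ℕ)) × ℕ => p.1.1 := Primrec.fst.comp .fst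
      have hk : Primrec fun p : (ℕ × ℕ × List (Option ℕ)) × ℕ => p.1.2.1 :=
        Primrec.fst.comp (Primrec.snd.comp .fst)
      have hT : Primrec fun p : (ℕ × ℕ × List (Option ℕ)) × ℕ => p.1.2.2 :=
        Primrec.snd.comp (Primrec.snd.comp .fst)
      have hn : Primrec fun p : (ℕ × ℕ × List (Option ℕ)) × ℕ => p.2 := Primrec.snd
      have hu1 : Primrec fun p : (ℕ × ℕ × List (Option ℕ)) × ℕ => p.2.unpair.1 :=
        Primrec.fst.comp (Primrec.unpair.comp hn)
      have hu2 : Primrec fun p : (ℕ × ℕ × List (Option ℕ)) × ℕ => p.2.unpair.2 :=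
        Primrec.snd.comp (Primrec.unpair.comp hn)
      simp only [hstep]
      refine Primrec.option_bind (β := ℕ) (σ := ℕ)
        (hf.comp (hj.pair ((Primrec.succ.comp hk).pair
          (Primrec₂.natPair.comp hu1 hu2))))
        (Primrec.to₂ (Primrec.ite (Primrec.eq.comp Primrec.snd (Primrec.const 0))
          (Primrec.option_some.comp (hu2.comp .fst))
          ((Primrec.list_getD none).comp (hT.comp .fst)
            (Primrec₂.natPair.comp (hu1.comp .fst)
              (Primrec.succ.comp (hu2.comp .fst))))))
    have hG : Primrec fun a : ℕ × ℕ × List (Option ℕ) =>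
        (List.range (a.2.1 + 1)).map (fun n => step a.1 a.2.1 a.2.2 n) :=
      Primrec.list_map (Primrec.list_range.comp (Primrec.succ.comp
        (Primrec.fst.comp Primrec.snd))) hstepP.to₂
    have htabP : Primrec₂ tab :=
      (Primrec.nat_rec (Primrec.const ([] : List (Option ℕ))) hG.to₂).of_eq fun j k => by
        induction k with
        | zero => rfl
        | succ k ih => show _ = (List.range (k + 1)).map (step j k (tab j k)); rw [← ih]
    refine Primrec.of_eq ?_ fun p => key p.1 p.2.1 p.2.2
    exact (Primrec.list_getD none).comp
      (htabP.comp Primrec.fst (Primrec.fst.comp Primrec.snd))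
      (Primrec.snd.comp Primrec.snd)

end OCodeDev

namespace OCodeDev

open MeasureTheory
open scoped ENNReal

/-! ### Cylinders coded by natural numbers -/

/-- The cylinder of sequences whose first `K` bits agree with the binary digits of `j`. -/
def cylJ (K j : ℕ) : Set (ℕ → Bool) := {X | ∀ i, i < K → X i = j.testBit i}

theorem cylJ_eq_cyl (K j : ℕ) : cylJ K j = cyl ((List.range K).map (fun i => j.testBit i)) := by
  ext X
  simp only [cylJ, cyl, Set.mem_setOf_eq, List.length_map, List.length_range]
  constructor
  · intro h i
    have hi : (i : ℕ) < K := by simpa using i.isLt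
    rw [h i hi]
    simp
  · intro h i hi
    have := h ⟨i, by simpa using hi⟩
    simpa using this

theorem measurable_cylJ (K j : ℕ) : MeasurableSet (cylJ K j) := by
  have : cylJ K j = ⋂ i ∈ Finset.range K, (fun X : ℕ → Bool => X i) ⁻¹' {j.testBit i} := by
    ext X; simp [cylJ]
  rw [this]
  exact MeasurableSet.biInter (Finset.range K).countable_toSet fun i _ =>
    (measurable_pi_apply i) (MeasurableSet.singleton _)

theorem count_true_add_count_false (σ : List Bool) :
    σ.count true + σ.count false = σ.length := by
  induction σ with
  | nil => rfl
  | cons b t ih => cases b <;> simp [List.count_cons] <;> omega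

theorem measure_cylJ {μ : Measure (ℕ → Bool)} (hμ : IsBernoulli 2⁻¹ μ) (K j : ℕ) :
    μ (cylJ K j) = 2⁻¹ ^ K := by
  rw [cylJ_eq_cyl, hμ.2]
  have h1 : ENNReal.ofReal (2⁻¹ : ℝ) = 2⁻¹ := by
    rw [ENNReal.ofReal_inv_of_pos (by norm_num), ENNReal.ofReal_ofNat]
  have h2 : ((1:ℝ) - 2⁻¹) = 2⁻¹ := by norm_num
  rw [h2, h1, ← pow_add, count_true_add_count_false]
  simp

theorem cylJ_disjoint {K j j' : ℕ} (hj : j < 2 ^ K) (hj' : j' < 2 ^ K) (hne : j ≠ j') :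
    Disjoint (cylJ K j) (cylJ K j') := by
  rw [Set.disjoint_left]
  intro X hX hX'
  apply hne
  apply Nat.eq_of_testBit_eq
  intro i
  by_cases hi : i < K
  · rw [← hX i hi, ← hX' i hi]
  · have h1 : j < 2 ^ i := lt_of_lt_of_le hj (Nat.pow_le_pow_right (by norm_num) (by omega))
    have h2 : j' < 2 ^ i := lt_of_lt_of_le hj' (Nat.pow_le_pow_right (by norm_num) (by omega))
    rw [Nat.testBit_lt_two_pow h1, Nat.testBit_lt_two_pow h2]

theorem measure_biUnion_cylJ {μ : Measure (ℕ → Bool)} (hμ : IsBernoulli 2⁻¹ μ) {K : ℕ}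
    (T : Finset ℕ) (hT : ∀ j ∈ T, j < 2 ^ K) :
    μ (⋃ j ∈ T, cylJ K j) = T.card * 2⁻¹ ^ K := by
  rw [measure_biUnion_finset ?_ fun j _ => measurable_cylJ K j]
  · rw [Finset.sum_congr rfl fun j _ => measure_cylJ hμ K j]
    simp [Finset.sum_const, nsmul_eq_mul]
  · intro x hx y hy hxy
    exact cylJ_disjoint (hT x hx) (hT y hy) hxy

/-! ### Truncations and bit manipulation -/

theorem testBit_add_mul_pow_lt {a t K i : ℕ} (h : i < K) :
    (a + 2 ^ K * t).testBit i = a.testBit i := by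
  have h1 : 2 ^ K * t = 2 ^ i * (2 ^ (K - i - 1) * t * 2) := by
    have e : i + (K - i - 1) + 1 = K := by omega
    calc 2 ^ K * t = 2 ^ (i + (K - i - 1) + 1) * t := by rw [e]
    _ = 2 ^ i * (2 ^ (K - i - 1) * t * 2) := by rw [pow_add, pow_add, pow_one]; ring
  rw [Nat.testBit_eq_decide_div_mod_eq, Nat.testBit_eq_decide_div_mod_eq, h1,
    Nat.add_mul_div_left _ _ (Nat.two_pow_pos i),
    Nat.add_mul_mod_self_right]

theorem testBit_add_mul_pow_self {a b K : ℕ} (ha : a < 2 ^ K) (hb : b ≤ 1) :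
    (a + 2 ^ K * b).testBit K = decide (b = 1) := by
  rw [Nat.testBit_eq_decide_div_mod_eq,
    Nat.add_mul_div_left _ _ (Nat.two_pow_pos K),
    Nat.div_eq_of_lt ha]
  interval_cases b <;> simp

/-- The number whose binary digits are the first `s` values of `G`. -/
def truncN (G : ℕ → Bool) : ℕ → ℕ
  | 0 => 0
  | s + 1 => truncN G s + 2 ^ s * (G s).toNat

theorem truncN_lt (G : ℕ → Bool) : ∀ s, truncN G s < 2 ^ s
  | 0 => by simp [truncN]
  | s + 1 => by
    have h1 := truncN_lt G s
    have h2 : (G s).toNat ≤ 1 := Bool.toNat_le _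
    have h3 : (2:ℕ) ^ (s + 1) = 2 ^ s * 2 := pow_succ 2 s
    show truncN G s + 2 ^ s * (G s).toNat < 2 ^ (s + 1)
    nlinarith

theorem testBit_truncN (G : ℕ → Bool) : ∀ {s i : ℕ}, i < s → (truncN G s).testBit i = G i := by
  intro s
  induction s with
  | zero => omega
  | succ s ih =>
    intro i hi
    rcases Nat.lt_succ_iff_lt_or_eq.1 hi with h | h
    · show (truncN G s + 2 ^ s * (G s).toNat).testBit i = G i
      rw [testBit_add_mul_pow_lt h, ih h]
    · subst h
      show (truncN G i + 2 ^ i * (G i).toNat).testBit i = G i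
      rw [testBit_add_mul_pow_self (truncN_lt G i) (Bool.toNat_le _)]
      cases G i <;> simp

theorem mem_cylJ_truncN (G : ℕ → Bool) (s : ℕ) : G ∈ cylJ s (truncN G s) :=
  fun i hi => (testBit_truncN G hi).symm

theorem mod_pow_eq_iff_testBit {j j₀ K : ℕ} (h0 : j₀ < 2 ^ K) :
    j % 2 ^ K = j₀ ↔ ∀ i, i < K → j.testBit i = j₀.testBit i := by
  constructor
  · intro h i hi
    rw [← h, Nat.testBit_mod_two_pow]
    simp [hi]
  · intro h
    apply Nat.eq_of_testBit_eq
    intro i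
    rw [Nat.testBit_mod_two_pow]
    by_cases hi : i < K
    · simp [hi, h i hi]
    · have : j₀ < 2 ^ i := lt_of_lt_of_le h0 (Nat.pow_le_pow_right (by norm_num) (by omega))
      simp [hi, Nat.testBit_lt_two_pow this]

theorem card_filter_mod {K s j₀ : ℕ} (hK : K ≤ s) (h0 : j₀ < 2 ^ K) :
    ((Finset.range (2 ^ s)).filter (fun j => j % 2 ^ K = j₀)).card = 2 ^ (s - K) := by
  have himg : (Finset.range (2 ^ s)).filter (fun j => j % 2 ^ K = j₀)
      = (Finset.range (2 ^ (s - K))).image (fun t => j₀ + 2 ^ K * t) := by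
    ext j
    simp only [Finset.mem_filter, Finset.mem_image, Finset.mem_range]
    constructor
    · rintro ⟨hj, hm⟩
      refine ⟨j / 2 ^ K, ?_, ?_⟩
      · rw [Nat.div_lt_iff_lt_mul (Nat.two_pow_pos K)]
        calc j < 2 ^ s := hj
        _ = 2 ^ (s - K) * 2 ^ K := by rw [← pow_add]; congr 1; omega
      · rw [← hm]; exact Nat.mod_add_div j (2 ^ K)
    · rintro ⟨t, ht, rfl⟩
      constructor
      · have h1 : j₀ + 2 ^ K * t < 2 ^ K * (t + 1) := by nlinarith
        have h2 : 2 ^ K * (t + 1) ≤ 2 ^ K * 2 ^ (s - K) := by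
          apply Nat.mul_le_mul_left; omega
        calc j₀ + 2 ^ K * t < 2 ^ K * (t + 1) := h1
        _ ≤ 2 ^ K * 2 ^ (s - K) := h2
        _ = 2 ^ s := by rw [← pow_add]; congr 1; omega
      · rw [Nat.add_mul_mod_self_left, Nat.mod_eq_of_lt h0]
  rw [himg, Finset.card_image_of_injOn, Finset.card_range]
  intro x _ y _ h
  have := Nat.add_left_cancel h
  exact Nat.eq_of_mul_eq_mul_left (Nat.two_pow_pos K) this

/-! ### The approximating sets -/

/-- Codes `j` of strings of length `s` extending `j₀`-prefix on which the computation
outputs bit `m` of the string itself. -/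
def JsetD (c : OCode) (K j₀ n m s : ℕ) : Finset ℕ :=
  (Finset.range (2 ^ s)).filter fun j =>
    K ≤ s ∧ m < s ∧ j % 2 ^ K = j₀ ∧ evalno (bitO j) s c n = some ((j.testBit m).toNat)

def DfinD (c : OCode) (K j₀ n m s : ℕ) : Set (ℕ → Bool) := ⋃ j ∈ JsetD c K j₀ n m s, cylJ s j

def DinfD (c : OCode) (K j₀ n m : ℕ) : Set (ℕ → Bool) :=
  cylJ K j₀ ∩ {G | evalo (oracleOf G) c n = Part.some ((G m).toNat)}

theorem measurable_DfinD (c : OCode) (K j₀ n m s : ℕ) : MeasurableSet (DfinD c K j₀ n m s) :=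
  (JsetD c K j₀ n m s).measurableSet_biUnion fun j _ => measurable_cylJ s j

theorem measure_DfinD {μ : Measure (ℕ → Bool)} (hμ : IsBernoulli 2⁻¹ μ) (c : OCode)
    (K j₀ n m s : ℕ) :
    μ (DfinD c K j₀ n m s) = (JsetD c K j₀ n m s).card * 2⁻¹ ^ s :=
  measure_biUnion_cylJ hμ _ fun j hj => by
    have := (Finset.mem_filter.1 hj).1; simpa [Finset.mem_range] using this

theorem bitO_agrees {G : ℕ → Bool} {s j : ℕ} (hG : G ∈ cylJ s j) :
    ∀ i, i < s → bitO j i = (G i).toNat := by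
  intro i hi
  rw [hG i hi]; rfl

theorem DfinD_subset_succ (c : OCode) (K j₀ n m s : ℕ) (h0 : j₀ < 2 ^ K) :
    DfinD c K j₀ n m s ⊆ DfinD c K j₀ n m (s + 1) := by
  intro G hG
  simp only [DfinD, Set.mem_iUnion, exists_prop] at hG ⊢
  obtain ⟨j, hj, hGj⟩ := hG
  obtain ⟨hjlt, hKs, hms, hmod, heval⟩ := by
    simpa only [JsetD, Finset.mem_filter, Finset.mem_range, and_assoc] using hj
  set j' := truncN G (s + 1) with hj'
  have hbits : ∀ i, i < s + 1 → j'.testBit i = G i := fun i hi => testBit_truncN G hi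
  refine ⟨j', ?_, fun i hi => (hbits i hi).symm⟩
  have hag : ∀ i, i < s → bitO j i = bitO j' i := by
    intro i hi
    rw [bitO_agrees hGj i hi]
    show _ = (j'.testBit i).toNat
    rw [hbits i (by omega)]
  have heval' : evalno (bitO j') (s + 1) c n = some ((j.testBit m).toNat) :=
    evalno_mono (Nat.le_succ s) hag heval
  simp only [JsetD, Finset.mem_filter, Finset.mem_range]
  refine ⟨truncN_lt G (s + 1), by omega, by omega, ?_, ?_⟩
  · rw [mod_pow_eq_iff_testBit h0]
    intro i hi
    rw [hbits i (by omega), hGj i (by omega)]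
    exact ((mod_pow_eq_iff_testBit h0).1 hmod i hi).symm ▸ rfl
  · rw [heval']
    congr 2
    rw [hbits m (by omega), hGj m (by omega)]

theorem DfinD_mono (c : OCode) (K j₀ n m : ℕ) (h0 : j₀ < 2 ^ K) :
    Monotone fun s => DfinD c K j₀ n m s :=
  monotone_nat_of_le_succ fun s => DfinD_subset_succ c K j₀ n m s h0

theorem DinfD_eq_iUnion (c : OCode) (K j₀ n m : ℕ) (h0 : j₀ < 2 ^ K) :
    DinfD c K j₀ n m = ⋃ s, DfinD c K j₀ n m s := by
  ext G
  constructor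
  · rintro ⟨hGcyl, hGev⟩
    have hv : (G m).toNat ∈ evalo (fun i => Part.some ((fun i => (G i).toNat) i)) c n := by
      show (G m).toNat ∈ evalo (oracleOf G) c n
      rw [hGev]; exact Part.mem_some _
    obtain ⟨k, hk⟩ := evalno_complete.1 hv
    set s := max (max K (m + 1)) k with hs
    have hKs : K ≤ s := le_trans (le_max_left _ _) (le_max_left _ _)
    have hms : m < s := lt_of_lt_of_le (Nat.lt_succ_self m)
      (le_trans (le_max_right K (m + 1)) (le_max_left _ _))
    have hks : k ≤ s := le_max_right _ _
    set j := truncN G s with hj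
    have hbits : ∀ i, i < s → j.testBit i = G i := fun i hi => testBit_truncN G hi
    have hag : ∀ i, i < k → (fun i => (G i).toNat) i = bitO j i := by
      intro i hi
      show (G i).toNat = (j.testBit i).toNat
      rw [hbits i (lt_of_lt_of_le hi hks)]
    have h2 : (G m).toNat ∈ evalno (bitO j) s c n := evalno_mono hks hag hk
    refine Set.mem_iUnion.2 ⟨s, Set.mem_iUnion.2 ⟨j, Set.mem_iUnion.2 ⟨?_, ?_⟩⟩⟩
    · simp only [JsetD, Finset.mem_filter, Finset.mem_range]
      refine ⟨truncN_lt G s, hKs, hms, ?_, ?_⟩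
      · rw [mod_pow_eq_iff_testBit h0]
        intro i hi
        rw [hbits i (lt_of_lt_of_le hi hKs), hGcyl i hi]
      · rw [Option.mem_def.1 h2]
        congr 2
        rw [hbits m hms]
    · exact fun i hi => (hbits i hi).symm
  · intro hG
    obtain ⟨s, hG⟩ := Set.mem_iUnion.1 hG
    obtain ⟨j, hj⟩ := Set.mem_iUnion.1 hG
    obtain ⟨hjmem, hGj⟩ := Set.mem_iUnion.1 hj
    obtain ⟨hjlt, hKs, hms, hmod, heval⟩ := by
      simpa only [JsetD, Finset.mem_filter, Finset.mem_range, and_assoc] using hjmem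
    constructor
    · intro i hi
      rw [hGj i (lt_of_lt_of_le hi hKs), (mod_pow_eq_iff_testBit h0).1 hmod i hi]
    · have hag : ∀ i, i < s → bitO j i = (G i).toNat := bitO_agrees hGj
      have h2 : (j.testBit m).toNat ∈ evalno (fun i => (G i).toNat) s c n :=
        evalno_mono (le_refl s) hag (Option.mem_def.2 heval)
      have h3 := evalno_sound h2
      show evalo (oracleOf G) c n = Part.some ((G m).toNat)
      have : (j.testBit m).toNat = (G m).toNat := by rw [hGj m hms]
      rw [← this]
      exact (Part.eq_some_iff.2 h3)

theorem measurable_DinfD (c : OCode) (K j₀ n m : ℕ) (h0 : j₀ < 2 ^ K) :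
    MeasurableSet (DinfD c K j₀ n m) := by
  rw [DinfD_eq_iUnion c K j₀ n m h0]
  exact MeasurableSet.iUnion fun s => measurable_DfinD c K j₀ n m s

theorem measure_DinfD {μ : Measure (ℕ → Bool)} (c : OCode) (K j₀ n m : ℕ) (h0 : j₀ < 2 ^ K) :
    μ (DinfD c K j₀ n m) = ⨆ s, μ (DfinD c K j₀ n m s) := by
  rw [DinfD_eq_iUnion c K j₀ n m h0]
  exact Directed.measure_iUnion (DfinD_mono c K j₀ n m h0).directed_le

theorem DinfD_subset_cylJ (c : OCode) (K j₀ n m : ℕ) : DinfD c K j₀ n m ⊆ cylJ K j₀ :=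
  Set.inter_subset_left

/-! ### The half bound for bit-agreement sets -/

theorem eqset_bound {μ : Measure (ℕ → Bool)} (hμ : IsBernoulli 2⁻¹ μ) {K j₀ : ℕ}
    (h0 : j₀ < 2 ^ K) {m m' : ℕ} (hne : m ≠ m') (hm' : K ≤ m') :
    μ ({G : ℕ → Bool | G m = G m'} ∩ cylJ K j₀) ≤ 2⁻¹ ^ (K + 1) := by
  classical
  set s := max (m + 1) (m' + 1) with hs
  have hms : m < s := lt_of_lt_of_le (Nat.lt_succ_self m) (le_max_left _ _)
  have hm's : m' < s := lt_of_lt_of_le (Nat.lt_succ_self m') (le_max_right _ _)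
  have hKs : K ≤ s := le_trans hm' (by omega)
  set MT := (Finset.range (2 ^ s)).filter (fun j => j % 2 ^ K = j₀) with hMT
  set ET := MT.filter (fun j => j.testBit m = j.testBit m') with hET
  set NT := MT.filter (fun j => ¬ j.testBit m = j.testBit m') with hNT
  -- covering
  have hsub : {G : ℕ → Bool | G m = G m'} ∩ cylJ K j₀ ⊆ ⋃ j ∈ ET, cylJ s j := by
    rintro G ⟨hGe, hGc⟩
    set j := truncN G s with hj
    have hbits : ∀ i, i < s → j.testBit i = G i := fun i hi => testBit_truncN G hi
    have hjET : j ∈ ET := by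
      rw [hET, hMT, Finset.mem_filter, Finset.mem_filter, Finset.mem_range]
      refine ⟨⟨truncN_lt G s, ?_⟩, ?_⟩
      · rw [mod_pow_eq_iff_testBit h0]
        intro i hi
        rw [hbits i (lt_of_lt_of_le hi hKs), hGc i hi]
      · rw [hbits m hms, hbits m' hm's]; exact hGe
    exact Set.mem_biUnion hjET (fun i hi => (hbits i hi).symm)
  -- injection from ET to NT
  have hcard : ET.card ≤ NT.card := by
    apply Finset.card_le_card_of_injOn (fun j => j ^^^ 2 ^ m')
    · intro j hj
      rw [hET, hMT, Finset.mem_coe, Finset.mem_filter, Finset.mem_filter, Finset.mem_range] at hj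
      obtain ⟨⟨hjlt, hmod⟩, hbit⟩ := hj
      have hp : (2 : ℕ) ^ m' < 2 ^ s := Nat.pow_lt_pow_right (by norm_num) hm's
      have hxlt : j ^^^ 2 ^ m' < 2 ^ s := Nat.xor_lt_two_pow hjlt hp
      have hbit' : ∀ i, (j ^^^ 2 ^ m').testBit i = (j.testBit i).xor (decide (m' = i)) := by
        intro i; rw [Nat.testBit_xor, Nat.testBit_two_pow]
      rw [hNT, hMT, Finset.mem_coe, Finset.mem_filter, Finset.mem_filter, Finset.mem_range]
      refine ⟨⟨hxlt, ?_⟩, ?_⟩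
      · rw [mod_pow_eq_iff_testBit h0]
        intro i hi
        rw [hbit' i]
        have : decide (m' = i) = false := by simp; omega
        rw [this]
        simp only [Bool.xor_false]
        exact (mod_pow_eq_iff_testBit h0).1 hmod i hi
      · rw [hbit' m, hbit' m']
        have h1 : decide (m' = m) = false := by simp [Ne.symm hne]
        have h2 : decide (m' = m') = true := by simp
        rw [h1, h2, hbit]
        cases j.testBit m' <;> simp
    · intro x _ y _ h
      have := congrArg (fun z => z ^^^ 2 ^ m') h
      simpa [Nat.xor_assoc] using this
  have hpart : ET.card + NT.card = MT.card := Finset.card_filter_add_card_filter_not _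
  have hMTcard : MT.card = 2 ^ (s - K) := card_filter_mod hKs h0
  have hsK : 1 ≤ s - K := by omega
  have hETcard : ET.card ≤ 2 ^ (s - K - 1) := by
    have h2 : (2:ℕ) ^ (s - K) = 2 * 2 ^ (s - K - 1) := by
      rw [← pow_succ']
      congr 1
      omega
    omega
  -- measure bound
  calc μ ({G : ℕ → Bool | G m = G m'} ∩ cylJ K j₀)
      ≤ μ (⋃ j ∈ ET, cylJ s j) := measure_mono hsub
    _ = ET.card * 2⁻¹ ^ s := by
        apply measure_biUnion_cylJ hμ
        intro j hj
        rw [hET, hMT, Finset.mem_filter, Finset.mem_filter, Finset.mem_range] at hj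
        exact hj.1.1
    _ ≤ (2 ^ (s - K - 1) : ℕ) * 2⁻¹ ^ s := by
        apply mul_le_mul_left
        exact_mod_cast Nat.cast_le.2 hETcard
    _ = 2⁻¹ ^ (K + 1) := by
        have hse : (s - K - 1) + (K + 1) = s := by omega
        have hone : (2:ℝ≥0∞) ^ (s - K - 1) * 2⁻¹ ^ (s - K - 1) = 1 := by
          rw [← mul_pow, ENNReal.mul_inv_cancel (by norm_num) ENNReal.ofNat_ne_top, one_pow]
        calc ((2 ^ (s - K - 1) : ℕ) : ℝ≥0∞) * 2⁻¹ ^ s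
            = 2 ^ (s - K - 1) * (2⁻¹ ^ (s - K - 1) * 2⁻¹ ^ (K + 1)) := by
              rw [Nat.cast_pow, Nat.cast_ofNat, ← pow_add, hse]
          _ = (2 ^ (s - K - 1) * 2⁻¹ ^ (s - K - 1)) * 2⁻¹ ^ (K + 1) := by ring
          _ = 2⁻¹ ^ (K + 1) := by rw [hone, one_mul]

end OCodeDev

namespace OCodeDev

open MeasureTheory
open scoped ENNReal

theorem toReal_pow_half (K : ℕ) : ((2⁻¹ : ℝ≥0∞) ^ K).toReal = (2⁻¹ : ℝ) ^ K := by
  rw [ENNReal.toReal_pow, ENNReal.toReal_inv]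
  norm_num

theorem foldl_add_ite (p : ℕ → Prop) [DecidablePred p] :
    ∀ (l : List ℕ) (acc : ℕ),
      l.foldl (fun a j => a + if p j then 1 else 0) acc
        = acc + (l.map (fun j => if p j then 1 else 0)).sum := by
  intro l
  induction l with
  | nil => simp
  | cons x t ih => intro acc; simp [ih, add_assoc]

theorem filter_card_eq_foldl (p : ℕ → Prop) [DecidablePred p] (N : ℕ) :
    ((Finset.range N).filter p).card
      = (List.range N).foldl (fun acc j => acc + if p j then 1 else 0) 0 := by
  rw [foldl_add_ite, Nat.zero_add]
  induction N with
  | zero => simp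
  | succ N ih =>
    rw [Finset.range_add_one, List.range_succ, Finset.filter_insert]
    by_cases hp : p N
    · rw [if_pos hp, Finset.card_insert_of_notMem (by simp), List.map_append, List.sum_append]
      simp [ih, hp]
    · rw [if_neg hp, List.map_append, List.sum_append]
      simp [ih, hp]

/-- The counting function used by the algorithm. -/
def cntJ (c : OCode) (K j₀ : ℕ) (n p : ℕ) : ℕ :=
  (List.range (2 ^ p.unpair.2)).foldl
    (fun acc j =>
      acc + if (K ≤ p.unpair.2 ∧ p.unpair.1 < p.unpair.2 ∧ j % 2 ^ K = j₀ ∧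
          evalno (bitO j) p.unpair.2 c n = some (bitO j p.unpair.1)) then 1 else 0) 0

theorem cntJ_eq_card (c : OCode) (K j₀ : ℕ) (n p : ℕ) :
    cntJ c K j₀ n p = (JsetD c K j₀ n p.unpair.1 p.unpair.2).card := by
  rw [cntJ, ← filter_card_eq_foldl]
  rfl

theorem primrec_cntJ (c : OCode) (K j₀ : ℕ) : Primrec₂ (cntJ c K j₀) := by
  have hrange : Primrec fun a : ℕ × ℕ => List.range (2 ^ a.2.unpair.2) :=
    Primrec.list_range.comp (primrec_pow.comp (Primrec.const 2)
      (Primrec.snd.comp (Primrec.unpair.comp Primrec.snd)))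
  have hu1 : Primrec fun x : (ℕ × ℕ) × ℕ × ℕ => x.1.2.unpair.1 :=
    Primrec.fst.comp (Primrec.unpair.comp (Primrec.snd.comp Primrec.fst))
  have hu2 : Primrec fun x : (ℕ × ℕ) × ℕ × ℕ => x.1.2.unpair.2 :=
    Primrec.snd.comp (Primrec.unpair.comp (Primrec.snd.comp Primrec.fst))
  have hn : Primrec fun x : (ℕ × ℕ) × ℕ × ℕ => x.1.1 := Primrec.fst.comp Primrec.fst
  have hj : Primrec fun x : (ℕ × ℕ) × ℕ × ℕ => x.2.2 := Primrec.snd.comp Primrec.snd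
  have hacc : Primrec fun x : (ℕ × ℕ) × ℕ × ℕ => x.2.1 := Primrec.fst.comp Primrec.snd
  have hc1 : PrimrecPred fun x : (ℕ × ℕ) × ℕ × ℕ => K ≤ x.1.2.unpair.2 :=
    Primrec.nat_le.comp (Primrec.const K) hu2
  have hc2 : PrimrecPred fun x : (ℕ × ℕ) × ℕ × ℕ => x.1.2.unpair.1 < x.1.2.unpair.2 :=
    Primrec.nat_lt.comp hu1 hu2
  have hc3 : PrimrecPred fun x : (ℕ × ℕ) × ℕ × ℕ => x.2.2 % 2 ^ K = j₀ :=
    Primrec.eq.comp (Primrec.nat_mod.comp hj (Primrec.const (2 ^ K))) (Primrec.const j₀)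
  have hc4 : PrimrecPred fun x : (ℕ × ℕ) × ℕ × ℕ =>
      evalno (bitO x.2.2) x.1.2.unpair.2 c x.1.1 = some (bitO x.2.2 x.1.2.unpair.1) :=
    Primrec.eq.comp ((evalno_primrec c).comp (hj.pair (hu2.pair hn)))
      (Primrec.option_some.comp (primrec_bitO.comp hj hu1))
  have hcond : PrimrecPred fun x : (ℕ × ℕ) × ℕ × ℕ =>
      (K ≤ x.1.2.unpair.2 ∧ x.1.2.unpair.1 < x.1.2.unpair.2 ∧ x.2.2 % 2 ^ K = j₀ ∧
        evalno (bitO x.2.2) x.1.2.unpair.2 c x.1.1 = some (bitO x.2.2 x.1.2.unpair.1)) :=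
    hc1.and (hc2.and (hc3.and hc4))
  have hstep : Primrec fun x : (ℕ × ℕ) × ℕ × ℕ =>
      x.2.1 + if (K ≤ x.1.2.unpair.2 ∧ x.1.2.unpair.1 < x.1.2.unpair.2 ∧ x.2.2 % 2 ^ K = j₀ ∧
          evalno (bitO x.2.2) x.1.2.unpair.2 c x.1.1 = some (bitO x.2.2 x.1.2.unpair.1))
        then 1 else 0 :=
    Primrec.nat_add.comp hacc (Primrec.ite hcond (Primrec.const 1) (Primrec.const 0))
  exact (Primrec.list_foldl hrange (Primrec.const 0) hstep.to₂).to₂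

theorem DfinD_subset_DinfD (c : OCode) (K j₀ n m : ℕ) (h0 : j₀ < 2 ^ K) (s : ℕ) :
    DfinD c K j₀ n m s ⊆ DinfD c K j₀ n m := by
  rw [DinfD_eq_iUnion c K j₀ n m h0]
  exact Set.subset_iUnion (fun s => DfinD c K j₀ n m s) s

theorem card_iff_measure {μ : Measure (ℕ → Bool)} (hμ : IsBernoulli 2⁻¹ μ) (c : OCode)
    {K : ℕ} (j₀ n m s : ℕ) (hKs : K ≤ s) :
    2 * 2 ^ (s - K) < 3 * (JsetD c K j₀ n m s).card ↔
      (2 / 3 : ℝ) * (2⁻¹ : ℝ) ^ K < (μ (DfinD c K j₀ n m s)).toReal := by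
  have hmeas : (μ (DfinD c K j₀ n m s)).toReal
      = ((JsetD c K j₀ n m s).card : ℝ) * (2⁻¹ : ℝ) ^ s := by
    rw [measure_DfinD hμ, ENNReal.toReal_mul, toReal_pow_half, ENNReal.toReal_natCast]
  rw [hmeas]
  set C := ((JsetD c K j₀ n m s).card : ℝ) with hC
  rw [← Nat.cast_lt (α := ℝ)]
  push_cast
  have hone : (2:ℝ) ^ (s - K) * (2⁻¹:ℝ) ^ (s - K) = 1 := by
    rw [← mul_pow]; norm_num
  have hsplit : ((2:ℝ)⁻¹) ^ s = (2⁻¹:ℝ) ^ (s - K) * (2⁻¹:ℝ) ^ K := by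
    rw [← pow_add]; congr 1; omega
  have hkey : ((2:ℝ) * 2 ^ (s - K)) * (2⁻¹:ℝ) ^ s = 2 * (2⁻¹:ℝ) ^ K := by
    rw [hsplit]
    calc ((2:ℝ) * 2 ^ (s - K)) * ((2⁻¹:ℝ) ^ (s - K) * (2⁻¹:ℝ) ^ K)
        = 2 * ((2:ℝ) ^ (s - K) * (2⁻¹:ℝ) ^ (s - K)) * (2⁻¹:ℝ) ^ K := by ring
      _ = 2 * (2⁻¹:ℝ) ^ K := by rw [hone]; ring
  have hpos : (0:ℝ) < (2⁻¹:ℝ) ^ s := by positivity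
  constructor
  · intro h
    have h2 := (mul_lt_mul_iff_of_pos_right hpos).2 h
    rw [hkey] at h2
    linarith
  · intro h
    have h2 : ((2:ℝ) * 2 ^ (s - K)) * (2⁻¹:ℝ) ^ s < (3 * C) * (2⁻¹:ℝ) ^ s := by
      rw [hkey]; linarith
    exact (mul_lt_mul_iff_of_pos_right hpos).1 h2

theorem bool_toNat_inj {b b' : Bool} (h : b.toNat = b'.toNat) : b = b' := by
  cases b <;> cases b' <;> simp_all

end OCodeDev

/-- if `{G : F(G) ≤_T G}` has positive uniform measure, then the
permutation `f` is computable. -/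
theorem computable_of_pullback_reducible (f : Equiv.Perm ℕ)
    (μ : Measure (ℕ → Bool)) (hμ : IsBernoulli 2⁻¹ μ)
    (hpos : 0 < μ {G | TLe (pullback (⇑f) G) G}) :
    Computable (⇑f) := by
  classical
  open OCodeDev in
  obtain ⟨hprob, hcylm⟩ := id hμ
  haveI := hprob
  have hfin : ∀ A : Set (ℕ → Bool), μ A ≠ ⊤ := fun A => measure_ne_top μ A
  -- Step 1: a single code with positive measure
  set S : OCode → Set (ℕ → Bool) :=
    fun c => {G | ∀ n, evalo (oracleOf G) c n = Part.some ((G (f n)).toNat)} with hS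
  have hcover : {G | TLe (pullback (⇑f) G) G} ⊆ ⋃ c : OCode, S c := by
    intro G hG
    obtain ⟨c, hc⟩ := hG
    exact Set.mem_iUnion.2 ⟨c, fun n => hc n⟩
  have hex : ∃ c : OCode, μ (S c) ≠ 0 := by
    by_contra h
    push_neg at h
    have h1 : μ {G | TLe (pullback (⇑f) G) G} ≤ ∑' c : OCode, μ (S c) :=
      le_trans (measure_mono hcover) (measure_iUnion_le S)
    rw [tsum_congr h, tsum_zero] at h1
    exact absurd (lt_of_lt_of_le hpos h1) (lt_irrefl 0)
  obtain ⟨c, ha0⟩ := hex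
  set a := μ (S c) with haDef
  have hatop : a ≠ ⊤ := hfin _
  have haR : 0 < a.toReal := ENNReal.toReal_pos ha0 hatop
  set E := toMeasurable μ (S c) with hE
  have hEmeas : MeasurableSet E := measurableSet_toMeasurable μ _
  have hEμ : μ E = a := measure_toMeasurable _
  -- Step 2: measure-dense approximation by cylinders
  have halg : MeasureTheory.IsSetAlgebra (measurableCylinders (fun _ : ℕ => Bool)) :=
    { empty_mem := empty_mem_measurableCylinders _
      compl_mem := fun _ h => compl_mem_measurableCylinders h
      union_mem := fun _ _ hs ht => union_mem_measurableCylinders hs ht }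
  have hdense : μ.MeasureDense (measurableCylinders (fun _ : ℕ => Bool)) :=
    Measure.MeasureDense.of_generateFrom_isSetAlgebra_finite μ halg
      (generateFrom_measurableCylinders).symm
  obtain ⟨t, htmem, htapprox⟩ :=
    hdense.approx E hEmeas (by rw [hEμ]; exact hatop) (a.toReal / 8) (by linarith)
  -- Step 3: t is a finite union of coded cylinders of length K
  obtain ⟨I, St, hStmeas, htcyl⟩ := (mem_measurableCylinders t).1 htmem
  set K := I.sup id + 1 with hK
  have hdep : ∀ X Y : ℕ → Bool, (∀ i, i < K → X i = Y i) → (X ∈ t ↔ Y ∈ t) := by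
    intro X Y hXY
    rw [htcyl, mem_cylinder, mem_cylinder]
    have hres : I.restrict X = I.restrict Y := by
      funext i
      exact hXY i (lt_of_le_of_lt (Finset.le_sup (f := id) i.2) (Nat.lt_succ_self _))
    rw [hres]
  set T := (Finset.range (2 ^ K)).filter (fun j => (fun i => j.testBit i) ∈ t) with hT
  have hTsub : ∀ j ∈ T, j < 2 ^ K := by
    intro j hj
    rw [hT, Finset.mem_filter, Finset.mem_range] at hj
    exact hj.1
  have htT : t = ⋃ j ∈ T, cylJ K j := by
    ext X
    constructor
    · intro hX
      have hjmem : truncN X K ∈ T := by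
        rw [hT, Finset.mem_filter, Finset.mem_range]
        refine ⟨truncN_lt X K, ?_⟩
        exact (hdep X _ (fun i hi => (testBit_truncN X hi).symm)).1 hX
      exact Set.mem_biUnion hjmem (mem_cylJ_truncN X K)
    · intro hX
      obtain ⟨j, hjT, hXj⟩ := Set.mem_iUnion₂.1 hX
      have hjt : (fun i => j.testBit i) ∈ t := by
        have := hjT
        rw [hT, Finset.mem_filter] at this
        exact this.2
      exact (hdep X (fun i => j.testBit i) (fun i hi => hXj i hi)).2 hjt
  have hμt : μ t = T.card * 2⁻¹ ^ K := by
    rw [htT]; exact measure_biUnion_cylJ hμ T hTsub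
  have hEt : (μ (symmDiff E t)).toReal < a.toReal / 8 :=
    (ENNReal.lt_ofReal_iff_toReal_lt (hfin _)).1 htapprox
  -- Step 4: find a good cylinder j₀
  have hEsub : μ E ≤ μ t + μ (symmDiff E t) := by
    refine le_trans (measure_mono ?_) (measure_union_le _ _)
    intro X hX
    by_cases hXt : X ∈ t
    · exact Or.inl hXt
    · exact Or.inr (Or.inl ⟨hX, hXt⟩)
  have hEsubR : a.toReal ≤ (μ t).toReal + (μ (symmDiff E t)).toReal := by
    have := ENNReal.toReal_mono (by
      exact ENNReal.add_ne_top.2 ⟨hfin _, hfin _⟩) hEsub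
    rwa [hEμ, ENNReal.toReal_add (hfin _) (hfin _)] at this
  have hTne : T.Nonempty := by
    by_contra hTe
    rw [Finset.not_nonempty_iff_eq_empty] at hTe
    have : μ t = 0 := by rw [hμt, hTe]; simp
    rw [this] at hEsubR
    simp at hEsubR
    linarith
  have hj0ex : ∃ j₀ ∈ T, 7 * (μ (cylJ K j₀ \ E)).toReal ≤ (2⁻¹ : ℝ) ^ K := by
    by_contra hno
    push_neg at hno
    have hdiffeq : t \ E = ⋃ j ∈ T, (cylJ K j \ E) := by
      rw [htT]
      ext X
      simp only [Set.mem_diff, Set.mem_iUnion, exists_prop]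
      tauto
    have hsum : μ (t \ E) = ∑ j ∈ T, μ (cylJ K j \ E) := by
      rw [hdiffeq]
      refine measure_biUnion_finset ?_ (fun j _ => (measurable_cylJ K j).diff hEmeas)
      intro x hx y hy hxy
      exact Disjoint.mono Set.diff_subset Set.diff_subset
        (cylJ_disjoint (hTsub x hx) (hTsub y hy) hxy)
    have hsumR : (μ (t \ E)).toReal = ∑ j ∈ T, (μ (cylJ K j \ E)).toReal := by
      rw [hsum, ENNReal.toReal_sum]
      intro j _
      exact hfin _
    have hstrict : (T.card : ℝ) * (2⁻¹ : ℝ) ^ K < ∑ j ∈ T, 7 * (μ (cylJ K j \ E)).toReal := by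
      calc (T.card : ℝ) * (2⁻¹ : ℝ) ^ K = ∑ _j ∈ T, (2⁻¹ : ℝ) ^ K := by
            rw [Finset.sum_const, nsmul_eq_mul]
        _ < ∑ j ∈ T, 7 * (μ (cylJ K j \ E)).toReal :=
            Finset.sum_lt_sum_of_nonempty hTne hno
    have htR : (μ t).toReal = (T.card : ℝ) * (2⁻¹ : ℝ) ^ K := by
      rw [hμt, ENNReal.toReal_mul, ENNReal.toReal_natCast, toReal_pow_half]
    have hdle : (μ (t \ E)).toReal ≤ (μ (symmDiff E t)).toReal := by
      apply ENNReal.toReal_mono (hfin _)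
      apply measure_mono
      intro X hX
      exact Or.inr ⟨hX.1, hX.2⟩
    rw [← Finset.mul_sum, ← hsumR] at hstrict
    rw [htR] at hEsubR
    linarith
  obtain ⟨j₀, hj₀T, hj₀E⟩ := hj0ex
  have hj₀lt : j₀ < 2 ^ K := hTsub j₀ hj₀T
  set r := (2⁻¹ : ℝ) ^ K with hr
  have hrpos : 0 < r := by positivity
  have hcylR : (μ (cylJ K j₀)).toReal = r := by
    rw [measure_cylJ hμ, toReal_pow_half]
  -- Step 5: measure bounds
  have hull : μ (E ∩ cylJ K j₀) = μ (S c ∩ cylJ K j₀) :=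
    Measure.measure_toMeasurable_inter (measurable_cylJ K j₀) hatop
  have hEcylR : r - r / 7 ≤ (μ (E ∩ cylJ K j₀)).toReal := by
    have hiad := measure_inter_add_diff (μ := μ) (cylJ K j₀) hEmeas
    have hiadR : (μ (cylJ K j₀ ∩ E)).toReal + (μ (cylJ K j₀ \ E)).toReal = r := by
      rw [← ENNReal.toReal_add (hfin _) (hfin _), hiad, hcylR]
    rw [Set.inter_comm]
    linarith
  have hlowR : ∀ n, K ≤ f n → r - r / 7 ≤ (μ (DinfD c K j₀ n (f n))).toReal := by
    intro n _
    have hsub : S c ∩ cylJ K j₀ ⊆ DinfD c K j₀ n (f n) := by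
      rintro G ⟨hG1, hG2⟩
      exact ⟨hG2, hG1 n⟩
    have h1 : (μ (S c ∩ cylJ K j₀)).toReal ≤ (μ (DinfD c K j₀ n (f n))).toReal :=
      ENNReal.toReal_mono (hfin _) (measure_mono hsub)
    rw [← hull] at h1
    linarith
  have hupR : ∀ n m, K ≤ f n → m ≠ f n → (μ (DinfD c K j₀ n m)).toReal ≤ r / 2 + r / 7 := by
    intro n m hn hne
    have hsplit : DinfD c K j₀ n m ⊆
        ({G : ℕ → Bool | G m = G (f n)} ∩ cylJ K j₀) ∪ (cylJ K j₀ \ DinfD c K j₀ n (f n)) := by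
      rintro G ⟨hGc, hGe⟩
      by_cases hfn : evalo (oracleOf G) c n = Part.some ((G (f n)).toNat)
      · left
        refine ⟨?_, hGc⟩
        have hv : Part.some ((G m).toNat) = Part.some ((G (f n)).toNat) := by
          rw [← hGe, ← hfn]
        have hv2 : (G m).toNat = (G (f n)).toNat := by
          simpa using hv
        exact bool_toNat_inj hv2
      · exact Or.inr ⟨hGc, fun hmem => hfn hmem.2⟩
    have hseq : (μ ({G : ℕ → Bool | G m = G (f n)} ∩ cylJ K j₀)).toReal ≤ r / 2 := by
      have := eqset_bound hμ hj₀lt hne hn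
      have h2 := ENNReal.toReal_mono (by norm_num) this
      rw [toReal_pow_half, pow_succ] at h2
      calc (μ _).toReal ≤ (2⁻¹:ℝ) ^ K * 2⁻¹ := h2
        _ = r / 2 := by rw [hr]; ring
    have hdiffR : (μ (cylJ K j₀ \ DinfD c K j₀ n (f n))).toReal ≤ r / 7 := by
      have hmdiff : μ (cylJ K j₀ \ DinfD c K j₀ n (f n))
          = μ (cylJ K j₀) - μ (DinfD c K j₀ n (f n)) :=
        measure_diff (DinfD_subset_cylJ c K j₀ n (f n))
          (measurable_DinfD c K j₀ n (f n) hj₀lt).nullMeasurableSet (hfin _)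
      have hDle : μ (DinfD c K j₀ n (f n)) ≤ μ (cylJ K j₀) :=
        measure_mono (DinfD_subset_cylJ c K j₀ n (f n))
      have := hlowR n hn
      rw [hmdiff, ENNReal.toReal_sub_of_le hDle (hfin _), hcylR]
      linarith
    calc (μ (DinfD c K j₀ n m)).toReal
        ≤ (μ (({G : ℕ → Bool | G m = G (f n)} ∩ cylJ K j₀)
            ∪ (cylJ K j₀ \ DinfD c K j₀ n (f n)))).toReal :=
          ENNReal.toReal_mono (hfin _) (measure_mono hsplit)
      _ ≤ (μ ({G : ℕ → Bool | G m = G (f n)} ∩ cylJ K j₀)).toReal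
            + (μ (cylJ K j₀ \ DinfD c K j₀ n (f n))).toReal := by
          have h3 := ENNReal.toReal_mono (ENNReal.add_ne_top.2 ⟨hfin _, hfin _⟩)
            (measure_union_le ({G : ℕ → Bool | G m = G (f n)} ∩ cylJ K j₀)
              (cylJ K j₀ \ DinfD c K j₀ n (f n)))
          rwa [ENNReal.toReal_add (hfin _) (hfin _)] at h3
      _ ≤ r / 2 + r / 7 := by linarith
  -- Step 6: the search predicate
  set pred : ℕ → ℕ → Bool := fun n p =>
    decide (K ≤ p.unpair.2 ∧ 2 * 2 ^ (p.unpair.2 - K) < 3 * cntJ c K j₀ n p) with hpred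
  have hpredC : Computable₂ pred := by
    have hu2 : Primrec fun x : ℕ × ℕ => x.2.unpair.2 :=
      Primrec.snd.comp (Primrec.unpair.comp Primrec.snd)
    have hc1 : PrimrecPred fun x : ℕ × ℕ => K ≤ x.2.unpair.2 :=
      Primrec.nat_le.comp (Primrec.const K) hu2
    have hc2 : PrimrecPred fun x : ℕ × ℕ =>
        2 * 2 ^ (x.2.unpair.2 - K) < 3 * cntJ c K j₀ x.1 x.2 :=
      Primrec.nat_lt.comp
        (Primrec.nat_mul.comp (Primrec.const 2)
          (primrec_pow.comp (Primrec.const 2) (Primrec.nat_sub.comp hu2 (Primrec.const K))))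
        (Primrec.nat_mul.comp (Primrec.const 3)
          ((primrec_cntJ c K j₀).comp Primrec.fst Primrec.snd))
    exact Primrec₂.to_comp (hc1.and hc2).decide
  -- Step 7: correctness of the search
  have hgood : ∀ n, K ≤ f n → ∀ p, pred n p = true → p.unpair.1 = f n := by
    intro n hn p hp
    rw [hpred] at hp
    simp only [decide_eq_true_eq] at hp
    obtain ⟨hKs, hcard⟩ := hp
    rw [cntJ_eq_card] at hcard
    have hmeas := (card_iff_measure hμ c j₀ n p.unpair.1 p.unpair.2 hKs).1 hcard
    have h1 : (μ (DfinD c K j₀ n p.unpair.1 p.unpair.2)).toReal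
        ≤ (μ (DinfD c K j₀ n p.unpair.1)).toReal :=
      ENNReal.toReal_mono (hfin _)
        (measure_mono (DfinD_subset_DinfD c K j₀ n p.unpair.1 hj₀lt p.unpair.2))
    by_contra hne
    have h2 := hupR n p.unpair.1 hn hne
    rw [← hr] at hmeas
    linarith
  have hterm : ∀ n, K ≤ f n → ∃ p, pred n p = true := by
    intro n hn
    have hlow := hlowR n hn
    have h23 : (2 / 3 : ℝ) * r < (μ (DinfD c K j₀ n (f n))).toReal := by linarith
    have h23' : ENNReal.ofReal ((2 / 3 : ℝ) * r) < μ (DinfD c K j₀ n (f n)) :=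
      (ENNReal.ofReal_lt_iff_lt_toReal (by positivity) (hfin _)).2 h23
    rw [measure_DinfD c K j₀ n (f n) hj₀lt] at h23'
    obtain ⟨s, hs⟩ := lt_iSup_iff.1 h23'
    set s' := max s K with hs'
    have hss' : μ (DfinD c K j₀ n (f n) s) ≤ μ (DfinD c K j₀ n (f n) s') :=
      measure_mono (DfinD_mono c K j₀ n (f n) hj₀lt (le_max_left s K))
    have hs'2 : ENNReal.ofReal ((2 / 3 : ℝ) * r) < μ (DfinD c K j₀ n (f n) s') :=
      lt_of_lt_of_le hs hss'
    have hs'R : (2 / 3 : ℝ) * r < (μ (DfinD c K j₀ n (f n) s')).toReal :=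
      (ENNReal.ofReal_lt_iff_lt_toReal (by positivity) (hfin _)).1 hs'2
    have hcard := (card_iff_measure hμ c j₀ n (f n) s' (le_max_right s K)).2 (by
      rw [← hr]; exact hs'R)
    refine ⟨Nat.pair (f n) s', ?_⟩
    rw [hpred]
    simp only [Nat.unpair_pair, decide_eq_true_eq]
    refine ⟨le_max_right s K, ?_⟩
    rw [cntJ_eq_card]
    simpa [Nat.unpair_pair] using hcard
  -- Step 8: the algorithm
  set bad : List ℕ := (List.range K).map (fun i => f.symm i) with hbad
  have hbadlen : bad.length = K := by simp [hbad]
  have hbadget : ∀ i (h : i < K), bad[i]'(by rwa [hbadlen]) = f.symm i := by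
    intro i h
    simp [hbad]
  have hbadnodup : bad.Nodup := by
    rw [hbad]
    exact (List.nodup_range (n := K)).map f.symm.injective
  have hmem_bad : ∀ n, n ∈ bad ↔ f n < K := by
    intro n
    rw [hbad]
    simp only [List.mem_map, List.mem_range]
    constructor
    · rintro ⟨i, hi, rfl⟩
      rwa [Equiv.apply_symm_apply]
    · intro h
      exact ⟨f n, h, by simp⟩
  have hindex : ∀ n, f n < K → bad.idxOf n = f n := by
    intro n h
    have h1 : bad.idxOf (bad[f n]'(by rwa [hbadlen])) = f n :=
      hbadnodup.idxOf_getElem (f n) (by rwa [hbadlen])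
    rwa [hbadget (f n) h, Equiv.symm_apply_apply] at h1
  set F : ℕ →. ℕ :=
    fun n => (Nat.rfind (fun p => Part.some (pred n p))).map (fun p => p.unpair.1) with hF
  have hFpart : Partrec F := by
    apply Partrec.map
    · exact Partrec.rfind (hpredC.partrec₂)
    · exact (Primrec.fst.comp (Primrec.unpair.comp Primrec.snd)).to_comp.to₂
  set H : ℕ →. ℕ :=
    fun n => bif decide (bad.idxOf n < bad.length) then Part.some (bad.idxOf n) else F n
    with hH
  have hHpart : Partrec H := by
    apply Partrec.cond
    · exact (Primrec.nat_lt.comp (Primrec.list_idxOf₁ bad) (Primrec.const bad.length)).decide.to_comp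
    · exact Computable.partrec (Primrec.list_idxOf₁ bad).to_comp
    · exact hFpart
  have hHcorrect : ∀ n, f n ∈ H n := by
    intro n
    show f n ∈ bif decide (bad.idxOf n < bad.length) then Part.some (bad.idxOf n) else F n
    by_cases hn : f n < K
    · have hmem : n ∈ bad := (hmem_bad n).2 hn
      have hidx : bad.idxOf n = f n := hindex n hn
      have hlt : bad.idxOf n < bad.length := List.idxOf_lt_length_iff.2 hmem
      rw [decide_eq_true hlt, cond_true, hidx]
      exact Part.mem_some _
    · have hmem : n ∉ bad := fun hmem => hn ((hmem_bad n).1 hmem)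
      have hlt : ¬ bad.idxOf n < bad.length := fun h => hmem (List.idxOf_lt_length_iff.1 h)
      rw [decide_eq_false hlt, cond_false]
      have hnK : K ≤ f n := le_of_not_gt hn
      obtain ⟨p0, hp0⟩ := hterm n hnK
      have hdom : (Nat.rfind (fun p => Part.some (pred n p))).Dom := by
        refine Nat.rfind_dom.2 ?_
        exact ⟨p0, by simpa using hp0, fun {m} _ => trivial⟩
      set p' := (Nat.rfind (fun p => Part.some (pred n p))).get hdom with hp'
      have hp'mem : p' ∈ Nat.rfind (fun p => Part.some (pred n p)) := Part.get_mem hdom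
      have hp'true : pred n p' = true := by
        have := Nat.rfind_spec hp'mem
        simpa using this
      have hp'val : p'.unpair.1 = f n := hgood n hnK p' hp'true
      rw [hF]
      have hmm : p'.unpair.1 ∈
          Part.map (fun p => p.unpair.1) (Nat.rfind fun p => Part.some (pred n p)) :=
        Part.mem_map _ hp'mem
      rwa [hp'val] at hmm
  exact Partrec.of_eq_tot hHpart hHcorrect
end
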